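/- arXiv:2502.20718 — 13 statements merged into one kernel-verified Lean document; each statement's English description precedes it below -/
import Mathlib

section
/- Suppose there exists Γ ⊆ {1,…,p} with |Γ| = p − s such that the pair (A, C_Γ) is NOT observable. Then, for the data Y_i = 0 ∈ ℝ^{t+1} for every i ∈ {1,…,p} (which is generated under at most s attacks from x_true = 0), the set of plausible states is infinite. (Lemma 2, claim 1: under failure of s-sparse observability the set of plausible states can be infinite.) -/
open Matrix

/-- Lemma 2, claim 1: if for some `Γ` with `|Γ| = p - s` the pair
`(A, C_Γ)` is not observable, then for the zero data `Y_i = 0` the set of plausible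
states is infinite. -/
theorem plausible_set_infinite_of_not_sparse_observable
    {n p s t : ℕ} (hsp : s ≤ p) (ht : n - 1 ≤ t)
    (A : Matrix (Fin n) (Fin n) ℝ) (C : Matrix (Fin p) (Fin n) ℝ)
    (Γ : Finset (Fin p)) (hΓcard : Γ.card = p - s)
    (hnotobs : ¬ (∀ x : Fin n → ℝ,
        (∀ i ∈ Γ, ∀ τ < n, ((C * A ^ τ).mulVec x) i = 0) → x = 0)) :
    {x : Fin n → ℝ | ∃ Γ' : Finset (Fin p), Γ'.card = p - s ∧
        ∀ i ∈ Γ', ∀ τ ≤ t, ((C * A ^ τ).mulVec x) i = 0}.Infinite := by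
  push_neg at hnotobs
  obtain ⟨x₀, hx₀, hx₀ne⟩ := hnotobs
  rcases Nat.eq_zero_or_pos n with hn | hn
  · exfalso
    apply hx₀ne
    subst hn
    exact funext fun i => i.elim0
  -- the low-degree remainder of the characteristic polynomial
  set q : Polynomial ℝ := A.charpoly - Polynomial.X ^ n with hq
  have hcardn : Fintype.card (Fin n) = n := Fintype.card_fin n
  have hdeg : A.charpoly.degree = (n : ℕ) := by
    rw [Matrix.charpoly_degree_eq_dim, hcardn]
  have hqdeg : q.natDegree < n := by
    by_cases hq0 : q = 0
    · simpa [hq0] using hn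
    · have hlt : q.degree < A.charpoly.degree := by
        rw [hq]
        apply Polynomial.degree_sub_lt
        · rw [hdeg, Polynomial.degree_X_pow]
        · exact (A.charpoly_monic).ne_zero
        · rw [(A.charpoly_monic).leadingCoeff, Polynomial.leadingCoeff_X_pow]
      rw [hdeg] at hlt
      exact (Polynomial.natDegree_lt_iff_degree_lt hq0).2 hlt
  have hAn : A ^ n = ∑ k ∈ Finset.range n, (-(q.coeff k)) • A ^ k := by
    have h1 : Polynomial.aeval A A.charpoly = 0 := A.aeval_self_charpoly
    have h3 : Polynomial.aeval A q = - (A ^ n) := by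
      rw [hq, map_sub, h1]
      simp
    have h4 : Polynomial.aeval A q = ∑ k ∈ Finset.range n, q.coeff k • A ^ k :=
      Polynomial.aeval_eq_sum_range' hqdeg A
    rw [← neg_neg (A ^ n), ← h3, h4]
    simp [neg_smul, Finset.sum_neg_distrib]
  have key : ∀ τ : ℕ, ∀ i ∈ Γ, ((C * A ^ τ).mulVec x₀) i = 0 := by
    intro τ
    induction τ using Nat.strong_induction_on with
    | _ τ ih =>
      intro i hi
      by_cases hτ : τ < n
      · exact hx₀ i hi τ hτ
      · push_neg at hτ
        have hsplit : A ^ τ = A ^ (τ - n) * A ^ n := by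
          rw [← pow_add, Nat.sub_add_cancel hτ]
        have hpow : A ^ τ = ∑ k ∈ Finset.range n, (-(q.coeff k)) • A ^ (τ - n + k) := by
          rw [hsplit, hAn, Matrix.mul_sum]
          refine Finset.sum_congr rfl fun k hk => ?_
          rw [mul_smul_comm, ← pow_add]
        rw [hpow, Matrix.mul_sum]
        have : ((∑ k ∈ Finset.range n, C * ((-(q.coeff k)) • A ^ (τ - n + k))).mulVec x₀) i
            = ∑ k ∈ Finset.range n, (-(q.coeff k)) * (((C * A ^ (τ - n + k)).mulVec x₀) i) := by
          rw [show (∑ k ∈ Finset.range n, C * (-(q.coeff k)) • A ^ (τ - n + k)) *ᵥ x₀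
              = ∑ k ∈ Finset.range n, (C * (-(q.coeff k)) • A ^ (τ - n + k)) *ᵥ x₀ from
            map_sum (Matrix.mulVec.addMonoidHomLeft x₀) _ _]
          simp only [Finset.sum_apply]
          refine Finset.sum_congr rfl fun k hk => ?_
          rw [Matrix.mul_smul, Matrix.smul_mulVec]
          simp
        rw [this]
        refine Finset.sum_eq_zero fun k hk => ?_
        have hk' : τ - n + k < τ := by
          have := Finset.mem_range.1 hk; omega
        rw [ih _ hk' i hi, mul_zero]
  apply Set.infinite_of_injective_forall_mem (f := fun c : ℝ => c • x₀)
  · exact smul_left_injective ℝ hx₀ne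
  · intro c
    refine ⟨Γ, hΓcard, fun i hi τ _ => ?_⟩
    rw [Matrix.mulVec_smul]
    simp [key τ i hi]
end

section
/- If the system is s-sparse observable, then for any data vectors Y_1,…,Y_p ∈ ℝ^{t+1}, the set of plausible states is finite; moreover its cardinality is at most the binomial coefficient C(p, s). (Lemma 2, claim 2.) -/
open Matrix

/-- Lemma 2, claim 2: if the system is `s`-sparse observable, then for
any data vectors the set of plausible states is finite, with cardinality at most
`C(p, s)`. -/
theorem plausible_set_finite_of_sparse_observable
    {n p s t : ℕ} (hsp : s ≤ p) (ht : n - 1 ≤ t)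
    (A : Matrix (Fin n) (Fin n) ℝ) (C : Matrix (Fin p) (Fin n) ℝ)
    (hobs : ∀ Γ : Finset (Fin p), Γ.card = p - s →
        ∀ x : Fin n → ℝ, (∀ i ∈ Γ, ∀ τ < n, ((C * A ^ τ).mulVec x) i = 0) → x = 0)
    (Y : Fin p → Fin (t + 1) → ℝ) :
    {x : Fin n → ℝ | ∃ Γ : Finset (Fin p), Γ.card = p - s ∧
        ∀ i ∈ Γ, ∀ τ : Fin (t + 1), ((C * A ^ (τ : ℕ)).mulVec x) i = Y i τ}.Finite ∧
    {x : Fin n → ℝ | ∃ Γ : Finset (Fin p), Γ.card = p - s ∧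
        ∀ i ∈ Γ, ∀ τ : Fin (t + 1), ((C * A ^ (τ : ℕ)).mulVec x) i = Y i τ}.ncard
      ≤ p.choose s := by
  classical
  set S : Set (Fin n → ℝ) := {x : Fin n → ℝ | ∃ Γ : Finset (Fin p), Γ.card = p - s ∧
        ∀ i ∈ Γ, ∀ τ : Fin (t + 1), ((C * A ^ (τ : ℕ)).mulVec x) i = Y i τ} with hS
  have key : ∀ (Γ : Finset (Fin p)), Γ.card = p - s →
      ∀ x y : Fin n → ℝ,
      (∀ i ∈ Γ, ∀ τ : Fin (t + 1), ((C * A ^ (τ : ℕ)).mulVec x) i = Y i τ) →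
      (∀ i ∈ Γ, ∀ τ : Fin (t + 1), ((C * A ^ (τ : ℕ)).mulVec y) i = Y i τ) →
      x = y := by
    intro Γ hΓ x y hx hy
    have hz := hobs Γ hΓ (x - y) ?_
    · exact sub_eq_zero.mp hz
    intro i hi τ hτ
    have hτ' : τ < t + 1 := lt_of_lt_of_le hτ (by omega)
    have h1 := hx i hi ⟨τ, hτ'⟩
    have h2 := hy i hi ⟨τ, hτ'⟩
    rw [Matrix.mulVec_sub]
    simp only [Pi.sub_apply]
    simp only at h1 h2
    rw [h1, h2, sub_self]
  -- choice of a witnessing Γ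
  let f : (Fin n → ℝ) → Finset (Fin p) := fun x =>
    if h : x ∈ S then h.choose else ∅
  have hmaps : ∀ x ∈ S, f x ∈ ((Finset.univ.powersetCard (p - s) :
      Finset (Finset (Fin p))) : Set (Finset (Fin p))) := by
    intro x hx
    simp only [f, dif_pos hx, Finset.mem_coe, Finset.mem_powersetCard]
    exact ⟨Finset.subset_univ _, hx.choose_spec.1⟩
  have hinj : Set.InjOn f S := by
    intro x hx y hy hxy
    simp only [f, dif_pos hx, dif_pos hy] at hxy
    have hxs := hx.choose_spec
    have hys := hy.choose_spec
    exact key hx.choose hxs.1 x y hxs.2 (hxy ▸ hys.2)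
  have hfin : S.Finite :=
    Set.Finite.of_finite_image (Set.toFinite _) hinj
  refine ⟨hfin, ?_⟩
  have := Set.ncard_le_ncard_of_injOn f hmaps hinj
    (Set.toFinite ((Finset.univ.powersetCard (p - s) :
      Finset (Finset (Fin p))) : Set (Finset (Fin p))))
  calc S.ncard ≤ _ := this
    _ = (Finset.univ.powersetCard (p - s) : Finset (Finset (Fin p))).card :=
        Set.ncard_coe_finset _
    _ = p.choose (p - s) := by
        rw [Finset.card_powersetCard, Finset.card_univ, Fintype.card_fin]
    _ = p.choose s := Nat.choose_symm hsp
end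

section
/- Assume 2s ≤ p and that the system is 2s-sparse observable. Then for any data vectors Y_1,…,Y_p ∈ ℝ^{t+1}, any two plausible states are equal. In particular, if the data are generated under at most s attacks from x_true, then the set of plausible states is exactly {x_true}. (Lemma 2, claim 3.) -/
open Matrix

/-- Lemma 2, claim 3: if `2s ≤ p` and the system is `2s`-sparse
observable, then any two plausible states are equal; moreover, if the data are
generated under at most `s` attacks from `x_true`, then the set of plausible states is
exactly `{x_true}`. -/
theorem plausible_state_unique_of_2s_sparse_observable
    {n p s t : ℕ} (hsp : 2 * s ≤ p) (ht : n - 1 ≤ t)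
    (A : Matrix (Fin n) (Fin n) ℝ) (C : Matrix (Fin p) (Fin n) ℝ)
    (hobs : ∀ Γ : Finset (Fin p), Γ.card = p - 2 * s →
        ∀ x : Fin n → ℝ, (∀ i ∈ Γ, ∀ τ < n, ((C * A ^ τ).mulVec x) i = 0) → x = 0)
    (Y : Fin p → Fin (t + 1) → ℝ) :
    (∀ x₁ x₂ : Fin n → ℝ,
      (∃ Γ : Finset (Fin p), Γ.card = p - s ∧
        ∀ i ∈ Γ, ∀ τ : Fin (t + 1), ((C * A ^ (τ : ℕ)).mulVec x₁) i = Y i τ) →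
      (∃ Γ : Finset (Fin p), Γ.card = p - s ∧
        ∀ i ∈ Γ, ∀ τ : Fin (t + 1), ((C * A ^ (τ : ℕ)).mulVec x₂) i = Y i τ) →
      x₁ = x₂) ∧
    (∀ xtrue : Fin n → ℝ,
      (∃ Λ : Finset (Fin p), Λ.card ≤ s ∧
        ∀ i ∉ Λ, ∀ τ : Fin (t + 1), Y i τ = ((C * A ^ (τ : ℕ)).mulVec xtrue) i) →
      {x : Fin n → ℝ | ∃ Γ : Finset (Fin p), Γ.card = p - s ∧
        ∀ i ∈ Γ, ∀ τ : Fin (t + 1), ((C * A ^ (τ : ℕ)).mulVec x) i = Y i τ}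
        = {xtrue}) := by
  have key : ∀ x₁ x₂ : Fin n → ℝ,
      (∃ Γ : Finset (Fin p), Γ.card = p - s ∧
        ∀ i ∈ Γ, ∀ τ : Fin (t + 1), ((C * A ^ (τ : ℕ)).mulVec x₁) i = Y i τ) →
      (∃ Γ : Finset (Fin p), Γ.card = p - s ∧
        ∀ i ∈ Γ, ∀ τ : Fin (t + 1), ((C * A ^ (τ : ℕ)).mulVec x₂) i = Y i τ) →
      x₁ = x₂ := by
    rintro x₁ x₂ ⟨Γ₁, h₁c, h₁⟩ ⟨Γ₂, h₂c, h₂⟩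
    have hu : (Γ₁ ∪ Γ₂).card ≤ p := by
      simpa using Finset.card_le_univ (Γ₁ ∪ Γ₂)
    have hui : (Γ₁ ∪ Γ₂).card + (Γ₁ ∩ Γ₂).card = Γ₁.card + Γ₂.card :=
      Finset.card_union_add_card_inter Γ₁ Γ₂
    have hcard : p - 2 * s ≤ (Γ₁ ∩ Γ₂).card := by omega
    obtain ⟨Γ, hΓsub, hΓcard⟩ := Finset.exists_subset_card_eq hcard
    have hzero : x₁ - x₂ = 0 := by
      apply hobs Γ hΓcard
      intro i hi τ hτ
      have hτt : τ < t + 1 := by omega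
      have hi1 : i ∈ Γ₁ := (Finset.mem_inter.1 (hΓsub hi)).1
      have hi2 : i ∈ Γ₂ := (Finset.mem_inter.1 (hΓsub hi)).2
      have e1 := h₁ i hi1 ⟨τ, hτt⟩
      have e2 := h₂ i hi2 ⟨τ, hτt⟩
      rw [Matrix.mulVec_sub]
      simp only [Pi.sub_apply]
      rw [e1, e2, sub_self]
    exact sub_eq_zero.1 hzero
  refine ⟨key, ?_⟩
  rintro xtrue ⟨Λ, hΛc, hΛ⟩
  have hcc : Λᶜ.card = p - Λ.card := by
    simpa using Finset.card_compl Λ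
  have hle : p - s ≤ Λᶜ.card := by omega
  obtain ⟨Γ, hΓsub, hΓcard⟩ := Finset.exists_subset_card_eq hle
  have hxt : ∃ Γ : Finset (Fin p), Γ.card = p - s ∧
      ∀ i ∈ Γ, ∀ τ : Fin (t + 1), ((C * A ^ (τ : ℕ)).mulVec xtrue) i = Y i τ := by
    refine ⟨Γ, hΓcard, fun i hi τ => ?_⟩
    exact (hΛ i (Finset.mem_compl.1 (hΓsub hi)) τ).symm
  ext x
  simp only [Set.mem_setOf_eq, Set.mem_singleton_iff]
  constructor
  · intro hx
    exact key x xtrue hx hxt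
  · rintro rfl
    exact hxt
end

section
/- Suppose the system is k-eigenvalue observable, i.e., for every complex eigenvalue λ of A there are at least k+1 indices i ∈ {1,…,p} such that λ is observable with respect to sensor i. Then the system is k-sparse observable, i.e., for every Γ ⊆ {1,…,p} with |Γ| = p − k, the pair (A, C_Γ) is observable. (Lemma 3, first part.) -/
open Matrix Polynomial

/-- Casting `mulVec` to ℂ. -/
lemma map_mul_ofReal {m n o : ℕ} (M : Matrix (Fin m) (Fin n) ℝ) (N : Matrix (Fin n) (Fin o) ℝ) :
    (M * N).map Complex.ofReal = M.map Complex.ofReal * N.map Complex.ofReal := by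
  ext i j
  simp only [Matrix.mul_apply, Matrix.map_apply]
  push_cast
  rfl

/-- Casting `mulVec` to ℂ. -/
lemma mulVec_map_ofReal {m n : ℕ} (M : Matrix (Fin m) (Fin n) ℝ) (x : Fin n → ℝ) :
    (M.map Complex.ofReal).mulVec (fun j => (x j : ℂ)) =
      fun i => ((M.mulVec x) i : ℂ) := by
  funext i
  simp only [Matrix.mulVec, dotProduct, Matrix.map_apply]
  push_cast
  rfl

/-- Lemma 3, first part: if every complex eigenvalue of `A` is observable
with respect to at least `k+1` sensors, then the system is `k`-sparse observable. -/
theorem sparse_observable_of_eigenvalue_observable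
    {n p k : ℕ} (hk : k < p)
    (A : Matrix (Fin n) (Fin n) ℝ) (C : Matrix (Fin p) (Fin n) ℝ)
    (heigobs : ∀ μ : ℂ,
      (∃ v : Fin n → ℂ, v ≠ 0 ∧ (A.map Complex.ofReal).mulVec v = μ • v) →
      k + 1 ≤ {i : Fin p | ∀ v : Fin n → ℂ,
          (A.map Complex.ofReal).mulVec v = μ • v →
          ((C.map Complex.ofReal).mulVec v) i = 0 → v = 0}.ncard) :
    ∀ Γ : Finset (Fin p), Γ.card = p - k →
      ∀ x : Fin n → ℝ, (∀ i ∈ Γ, ∀ τ < n, ((C * A ^ τ).mulVec x) i = 0) → x = 0 := by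
  classical
  intro Γ hΓ x hx
  by_contra hx0
  have hn : 0 < n := by
    by_contra hn
    push_neg at hn
    exact hx0 (funext fun i => absurd i.isLt (by omega))
  set AC : Matrix (Fin n) (Fin n) ℂ := A.map Complex.ofReal with hACdef
  set CC : Matrix (Fin p) (Fin n) ℂ := C.map Complex.ofReal with hCCdef
  set xc : Fin n → ℂ := fun j => (x j : ℂ) with hxcdef
  have hxc0 : xc ≠ 0 := by
    intro h
    apply hx0
    funext j
    have := congrFun h j
    simpa [hxcdef, Complex.ofReal_eq_zero] using this
  -- casting the hypothesis
  have hACpow : ∀ τ : ℕ, (A ^ τ).map Complex.ofReal = AC ^ τ := by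
    intro τ
    induction τ with
    | zero => simp [Matrix.map_one]
    | succ t ih => rw [pow_succ, pow_succ, map_mul_ofReal, ih]
  have hxC : ∀ i ∈ Γ, ∀ τ < n, ((CC * AC ^ τ).mulVec xc) i = 0 := by
    intro i hi τ hτ
    have h1 : (C * A ^ τ).map Complex.ofReal = CC * AC ^ τ := by
      rw [map_mul_ofReal, hACpow]
    have := congrFun (mulVec_map_ofReal (C * A ^ τ) x) i
    rw [h1] at this
    rw [this, hx i hi τ hτ, Complex.ofReal_zero]
  -- extend to all powers via Cayley–Hamilton
  have hxCall : ∀ i ∈ Γ, ∀ τ : ℕ, ((CC * AC ^ τ).mulVec xc) i = 0 := by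
    intro i hi τ
    have hpow : AC ^ τ = aeval AC (X ^ τ %ₘ AC.charpoly) :=
      Matrix.pow_eq_aeval_mod_charpoly AC τ
    set q : ℂ[X] := X ^ τ %ₘ AC.charpoly with hq
    have hdeg : q.natDegree < n := by
      have h1 : q.degree < AC.charpoly.degree :=
        Polynomial.degree_modByMonic_lt _ (Matrix.charpoly_monic AC)
      rw [Matrix.charpoly_degree_eq_dim, Fintype.card_fin] at h1
      by_cases hq0 : q = 0
      · simpa [hq0] using hn
      · exact (Polynomial.natDegree_lt_iff_degree_lt hq0).2 h1
    have haeval : aeval AC q = ∑ j ∈ Finset.range n, q.coeff j • AC ^ j :=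
      Polynomial.aeval_eq_sum_range' hdeg AC
    rw [hpow, haeval]
    rw [Matrix.mul_sum]
    have hsum : (∑ j ∈ Finset.range n, CC * q.coeff j • AC ^ j) *ᵥ xc
        = ∑ j ∈ Finset.range n, (CC * q.coeff j • AC ^ j) *ᵥ xc := by
      exact map_sum
        ({ toFun := fun M : Matrix (Fin p) (Fin n) ℂ => M *ᵥ xc,
           map_zero' := Matrix.zero_mulVec xc,
           map_add' := fun M N => Matrix.add_mulVec M N xc } : _ →+ (Fin p → ℂ))
        _ _
    rw [hsum, Finset.sum_apply]
    apply Finset.sum_eq_zero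
    intro j hj
    have hj' : j < n := Finset.mem_range.1 hj
    rw [Matrix.mul_smul, Matrix.smul_mulVec]
    simp [hxC i hi j hj']
  -- the unobservable subspace over ℂ
  set W : Submodule ℂ (Fin n → ℂ) :=
    ⨅ (i : Fin p) (_ : i ∈ Γ) (τ : ℕ),
      LinearMap.ker ((LinearMap.proj i).comp (CC * AC ^ τ).mulVecLin) with hWdef
  have memW : ∀ v : Fin n → ℂ,
      v ∈ W ↔ ∀ i ∈ Γ, ∀ τ : ℕ, ((CC * AC ^ τ).mulVec v) i = 0 := by
    intro v
    simp [hWdef, Submodule.mem_iInf, LinearMap.mem_ker]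
  have hxW : xc ∈ W := (memW xc).2 hxCall
  -- A-invariance of W
  have hinv : ∀ v ∈ W, AC.mulVecLin v ∈ W := by
    intro v hv
    rw [memW] at hv ⊢
    intro i hi τ
    have : (CC * AC ^ τ).mulVec (AC.mulVec v) = (CC * AC ^ (τ + 1)).mulVec v := by
      rw [Matrix.mulVec_mulVec, Matrix.mul_assoc, ← pow_succ]
    simpa [Matrix.mulVecLin_apply, this] using hv i hi (τ + 1)
  -- restricted endomorphism has an eigenvalue
  haveI : Nontrivial W := nontrivial_of_ne ⟨xc, hxW⟩ 0 (by
    intro h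
    exact hxc0 (by simpa using congrArg Subtype.val h))
  set f : Module.End ℂ W := AC.mulVecLin.restrict hinv with hfdef
  obtain ⟨μ, hμ⟩ := Module.End.exists_eigenvalue f
  obtain ⟨w, hw⟩ := hμ.exists_hasEigenvector
  set v : Fin n → ℂ := (w : Fin n → ℂ) with hvdef
  have hv0 : v ≠ 0 := by
    intro h
    exact hw.2 (by ext; simpa [hvdef] using congrFun h _)
  have hAv : AC.mulVec v = μ • v := by
    have := hw.apply_eq_smul
    have h2 := congrArg Subtype.val this
    simpa [hfdef, LinearMap.restrict_apply, Matrix.mulVecLin_apply, hvdef] using h2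
  -- counting argument
  set S : Set (Fin p) := {i : Fin p | ∀ v : Fin n → ℂ,
      AC.mulVec v = μ • v → (CC.mulVec v) i = 0 → v = 0} with hSdef
  have hS : k + 1 ≤ S.ncard := heigobs μ ⟨v, hv0, hAv⟩
  have hScard : S.ncard = S.toFinset.card := Set.ncard_eq_toFinset_card' S
  have hex : ∃ i, i ∈ Γ ∧ i ∈ S := by
    by_contra hcon
    push_neg at hcon
    have hdisj : Disjoint Γ S.toFinset := by
      rw [Finset.disjoint_left]
      intro a ha ha'
      exact hcon a ha (Set.mem_toFinset.1 ha')
    have := Finset.card_le_univ (Γ ∪ S.toFinset)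
    rw [Finset.card_union_of_disjoint hdisj, hΓ, ← hScard] at this
    simp only [Finset.card_univ, Fintype.card_fin] at this
    omega
  obtain ⟨i, hiΓ, hiS⟩ := hex
  have hCv : (CC.mulVec v) i = 0 := by
    have := ((memW v).1 w.2) i hiΓ 0
    simpa using this
  exact hv0 (hiS v hAv hCv)
end

section
/- Suppose the system is k-sparse observable, i.e., (A, C_Γ) is observable for every Γ ⊆ {1,…,p} with |Γ| = p − k, and suppose that every complex eigenvalue λ of A has geometric multiplicity one, i.e., dim_ℂ ker(A − λI) = 1. Then the system is k-eigenvalue observable, i.e., every complex eigenvalue of A is observable with respect to at least k+1 sensors. (Lemma 3, second part.) -/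
open Matrix

private lemma re_mulVec {p n : ℕ} (M : Matrix (Fin p) (Fin n) ℝ) (v : Fin n → ℂ) (i : Fin p) :
    ((M.map Complex.ofReal).mulVec v i).re = (M.mulVec fun j => (v j).re) i := by
  simp [mulVec, dotProduct, Complex.mul_re, Matrix.map_apply]

private lemma im_mulVec {p n : ℕ} (M : Matrix (Fin p) (Fin n) ℝ) (v : Fin n → ℂ) (i : Fin p) :
    ((M.map Complex.ofReal).mulVec v i).im = (M.mulVec fun j => (v j).im) i := by
  simp [mulVec, dotProduct, Complex.mul_im, Matrix.map_apply]

/-- Lemma 3, second part: if the system is `k`-sparse observable and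
every complex eigenvalue of `A` has geometric multiplicity one, then every complex
eigenvalue of `A` is observable with respect to at least `k+1` sensors. -/
theorem eigenvalue_observable_of_sparse_observable
    {n p k : ℕ} (hk : k < p)
    (A : Matrix (Fin n) (Fin n) ℝ) (C : Matrix (Fin p) (Fin n) ℝ)
    (hobs : ∀ Γ : Finset (Fin p), Γ.card = p - k →
        ∀ x : Fin n → ℝ, (∀ i ∈ Γ, ∀ τ < n, ((C * A ^ τ).mulVec x) i = 0) → x = 0)
    (hgeo : ∀ μ : ℂ,
      (∃ v : Fin n → ℂ, v ≠ 0 ∧ (A.map Complex.ofReal).mulVec v = μ • v) →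
      Module.finrank ℂ
        (LinearMap.ker (Matrix.mulVecLin
          (A.map Complex.ofReal - μ • (1 : Matrix (Fin n) (Fin n) ℂ)))) = 1) :
    ∀ μ : ℂ,
      (∃ v : Fin n → ℂ, v ≠ 0 ∧ (A.map Complex.ofReal).mulVec v = μ • v) →
      k + 1 ≤ {i : Fin p | ∀ v : Fin n → ℂ,
          (A.map Complex.ofReal).mulVec v = μ • v →
          ((C.map Complex.ofReal).mulVec v) i = 0 → v = 0}.ncard := by
  classical
  intro μ hμ
  obtain ⟨v, hv0, hv⟩ := hμ
  set A' := A.map Complex.ofReal with hA'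
  set K := LinearMap.ker (Matrix.mulVecLin (A' - μ • (1 : Matrix (Fin n) (Fin n) ℂ))) with hK
  have hker : ∀ w : Fin n → ℂ, A'.mulVec w = μ • w ↔ w ∈ K := by
    intro w
    simp only [hK, LinearMap.mem_ker, mulVecLin_apply, sub_mulVec, smul_mulVec,
      one_mulVec, sub_eq_zero]
  -- generator of the kernel
  have hrank := hgeo μ ⟨v, hv0, hv⟩
  obtain ⟨⟨v₀, hv₀K⟩, _, hv₀gen⟩ := finrank_eq_one_iff'.mp hrank
  by_contra hcon
  push_neg at hcon
  set S := {i : Fin p | ∀ w : Fin n → ℂ,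
      A'.mulVec w = μ • w → ((C.map Complex.ofReal).mulVec w) i = 0 → w = 0} with hS
  have hSle : S.ncard ≤ k := Nat.lt_succ_iff.mp hcon
  -- cardinality of complement
  have hfin : S.Finite := Set.toFinite S
  have hScard : hfin.toFinset.card ≤ k := by
    rwa [Set.ncard_eq_toFinset_card S hfin] at hSle
  have hcompl : p - k ≤ hfin.toFinsetᶜ.card := by
    have : hfin.toFinsetᶜ.card = p - hfin.toFinset.card := by
      rw [Finset.card_compl, Fintype.card_fin]
    omega
  obtain ⟨Γ, hΓsub, hΓcard⟩ := Finset.exists_subset_card_eq hcompl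
  -- each i ∈ Γ kills all eigenvectors
  have hCi : ∀ i ∈ Γ, ((C.map Complex.ofReal).mulVec v) i = 0 := by
    intro i hi
    have hiS : ∃ w : Fin n → ℂ, A'.mulVec w = μ • w ∧
        ((C.map Complex.ofReal).mulVec w) i = 0 ∧ ¬ w = 0 := by
      have := Finset.mem_compl.mp (hΓsub hi)
      simpa [Set.Finite.mem_toFinset, hS] using this
    obtain ⟨w, hwe, hwC, hw0⟩ := hiS
    -- v and w both in the 1-dim kernel
    have hwK : w ∈ K := (hker w).mp hwe
    have hvK : v ∈ K := (hker v).mp hv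
    obtain ⟨c, hc⟩ := hv₀gen ⟨w, hwK⟩
    obtain ⟨d, hd⟩ := hv₀gen ⟨v, hvK⟩
    have hcw : c • v₀ = w := congrArg Subtype.val hc
    have hdv : d • v₀ = v := congrArg Subtype.val hd
    have hc0 : c ≠ 0 := by
      rintro rfl
      exact hw0 (by rw [← hcw, zero_smul])
    have hCv₀ : ((C.map Complex.ofReal).mulVec v₀) i = 0 := by
      have : ((C.map Complex.ofReal).mulVec (c • v₀)) i = 0 := by rw [hcw]; exact hwC
      rw [mulVec_smul] at this
      simpa [hc0] using this
    rw [← hdv, mulVec_smul]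
    simp [hCv₀]
  -- eigenvector powers
  have hpow : ∀ τ : ℕ, (A' ^ τ).mulVec v = μ ^ τ • v := by
    intro τ
    induction τ with
    | zero => simp
    | succ t ih =>
        rw [pow_succ, ← mulVec_mulVec, hv, mulVec_smul, ih, smul_smul, pow_succ, mul_comm μ (μ ^ t)]
  have hkey : ∀ i ∈ Γ, ∀ τ : ℕ, (((C * A ^ τ).map Complex.ofReal).mulVec v) i = 0 := by
    intro i hi τ
    have hmap : (C * A ^ τ).map Complex.ofReal
        = (C.map Complex.ofReal) * (A' ^ τ) := by
      have h1 : (A ^ τ).map Complex.ofReal = A' ^ τ := by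
        exact map_pow (Complex.ofRealHom.mapMatrix) A τ
      rw [hA', ← h1]
      exact Matrix.map_mul (L := C) (M := A ^ τ) (f := Complex.ofRealHom)
    rw [hmap, ← mulVec_mulVec, hpow, mulVec_smul]
    simp [hCi i hi]
  -- real and imaginary parts vanish
  have hre : (fun j => (v j).re) = 0 := by
    apply hobs Γ hΓcard
    intro i hi τ _
    have := hkey i hi τ
    have h2 := congrArg Complex.re this
    rw [re_mulVec] at h2
    simpa using h2
  have him : (fun j => (v j).im) = 0 := by
    apply hobs Γ hΓcard
    intro i hi τ _
    have := hkey i hi τ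
    have h2 := congrArg Complex.im this
    rw [im_mulVec] at h2
    simpa using h2
  apply hv0
  funext j
  have h1 : (v j).re = 0 := congrFun hre j
  have h2 : (v j).im = 0 := congrFun him j
  exact Complex.ext h1 h2
end

section
/- Let A ∈ ℂ^{n×n}, let λ_1,…,λ_r be the distinct complex eigenvalues of A, let V^j = ker((A − λ_j I)^n) ⊆ ℂ^n be the generalized eigenspaces, let C ∈ ℂ^{m×n}, and let t ≥ n−1. If v_j ∈ V^j for j = 1,…,r satisfy C A^τ (v_1 + ⋯ + v_r) = 0 for all 0 ≤ τ ≤ t, then C A^τ v_j = 0 for all j and all 0 ≤ τ ≤ t. Equivalently, the subspaces {𝒪(V^j)}_{j=1,…,r} of ℂ^{m(t+1)}, where 𝒪 x = (C A^τ x)_{0 ≤ τ ≤ t}, form an independent family. (Independence of generalized-eigenspace responses, underlying Lemma 4.) -/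
open Matrix

private lemma mulVec_sum_aux {m n : ℕ} {ι : Type*} (s : Finset ι)
    (M : Matrix (Fin m) (Fin n) ℂ) (f : ι → Fin n → ℂ) :
    M.mulVec (∑ i ∈ s, f i) = ∑ i ∈ s, M.mulVec (f i) := by
  induction s using Finset.cons_induction with
  | empty => simp
  | cons a s ha ih => simp [Finset.sum_cons, Matrix.mulVec_add, ih]

private lemma sum_mulVec_aux {m n : ℕ} {ι : Type*} (s : Finset ι)
    (M : ι → Matrix (Fin m) (Fin n) ℂ) (x : Fin n → ℂ) :
    (∑ i ∈ s, M i).mulVec x = ∑ i ∈ s, (M i).mulVec x := by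
  induction s using Finset.cons_induction with
  | empty => simp
  | cons a s ha ih => simp [Finset.sum_cons, Matrix.add_mulVec, ih]

/-- independence of generalized-eigenspace responses.  If vectors `v j`
lie in the generalized eigenspaces of distinct eigenvalues `lam j` of `A`, and the
response of their sum vanishes over the horizon `t ≥ n - 1`, then the response of each
`v j` vanishes over that horizon. -/
theorem generalized_eigenspace_responses_independent
    {n m r t : ℕ} (ht : n - 1 ≤ t)
    (A : Matrix (Fin n) (Fin n) ℂ) (C : Matrix (Fin m) (Fin n) ℂ)
    (lam : Fin r → ℂ) (hlam : Function.Injective lam)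
    (heig : ∀ j, ∃ w : Fin n → ℂ, w ≠ 0 ∧ A.mulVec w = lam j • w)
    (v : Fin r → Fin n → ℂ)
    (hv : ∀ j, ((A - lam j • 1) ^ n).mulVec (v j) = 0)
    (hsum : ∀ τ ≤ t, (C * A ^ τ).mulVec (∑ j, v j) = 0) :
    ∀ j, ∀ τ ≤ t, (C * A ^ τ).mulVec (v j) = 0 := by
  rcases Nat.eq_zero_or_pos n with hn | hn
  · subst hn
    intro j τ _
    have hv0 : v j = 0 := Subsingleton.elim _ _
    rw [hv0, Matrix.mulVec_zero]
  set x : Fin n → ℂ := ∑ j, v j with hx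
  have hCH : Polynomial.aeval A A.charpoly = 0 := Matrix.aeval_self_charpoly A
  have hmono : A.charpoly.Monic := A.charpoly_monic
  have hdeg : A.charpoly.natDegree = n := by
    simpa using A.charpoly_natDegree_eq_dim
  -- key: the response of x to any polynomial in A vanishes
  have hkey : ∀ p : Polynomial ℂ, (C * Polynomial.aeval A p).mulVec x = 0 := by
    intro p
    have heq : Polynomial.aeval A p = Polynomial.aeval A (p %ₘ A.charpoly) := by
      conv_lhs => rw [← Polynomial.modByMonic_add_div p A.charpoly]
      simp [hCH]
    rw [heq]
    set q := p %ₘ A.charpoly with hq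
    have hqdeg : q.natDegree < n := by
      rcases eq_or_ne q 0 with h0 | h0
      · simpa [h0] using hn
      · have hd := Polynomial.degree_modByMonic_lt p hmono
        rw [← hq, Polynomial.degree_eq_natDegree hmono.ne_zero, hdeg] at hd
        exact (Polynomial.natDegree_lt_iff_degree_lt h0).mpr hd
    rw [Polynomial.aeval_eq_sum_range, Matrix.mul_sum, sum_mulVec_aux]
    apply Finset.sum_eq_zero
    intro i hi
    have hit : i ≤ t := by
      have := Finset.mem_range.mp hi
      omega
    rw [Matrix.mul_smul, Matrix.smul_mulVec, hsum i hit, smul_zero]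
  intro j
  classical
  set a : Polynomial ℂ := (Polynomial.X - Polynomial.C (lam j)) ^ n with ha
  set b : Polynomial ℂ :=
    ∏ k ∈ Finset.univ.erase j, (Polynomial.X - Polynomial.C (lam k)) ^ n with hb
  have haev : ∀ μ : ℂ,
      Polynomial.aeval A ((Polynomial.X - Polynomial.C μ) ^ n) = (A - μ • 1) ^ n := by
    intro μ
    simp [Algebra.algebraMap_eq_smul_one]
  have hcop : IsCoprime a b := by
    apply IsCoprime.prod_right
    intro k hk
    have hkj : k ≠ j := (Finset.mem_erase.mp hk).1
    have : IsCoprime (Polynomial.X - Polynomial.C (lam j))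
        (Polynomial.X - Polynomial.C (lam k)) :=
      Polynomial.pairwise_coprime_X_sub_C hlam (fun h => hkj h.symm)
    exact this.pow
  obtain ⟨u, w, huw⟩ := hcop
  -- b kills v k for k ≠ j
  have hbv : ∀ k, k ≠ j → (Polynomial.aeval A b).mulVec (v k) = 0 := by
    intro k hkj
    have hmem : k ∈ Finset.univ.erase j := Finset.mem_erase.mpr ⟨hkj, Finset.mem_univ k⟩
    have hfac : b = (Polynomial.X - Polynomial.C (lam k)) ^ n *
        ∏ l ∈ (Finset.univ.erase j).erase k, (Polynomial.X - Polynomial.C (lam l)) ^ n := by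
      rw [hb, ← Finset.mul_prod_erase _ _ hmem]
    rw [mul_comm] at hfac
    rw [hfac, _root_.map_mul, ← Matrix.mulVec_mulVec, haev, hv k, Matrix.mulVec_zero]
  -- w*b acts as projection onto v j on x
  have hproj : (Polynomial.aeval A (w * b)).mulVec x = v j := by
    have hwb : w * b = 1 - u * a := by
      rw [eq_sub_iff_add_eq, ← huw, add_comm]
    have hsplit : (Polynomial.aeval A (w * b)).mulVec x
        = ∑ k, (Polynomial.aeval A (w * b)).mulVec (v k) := by
      rw [hx, mulVec_sum_aux]
    rw [hsplit]
    rw [Finset.sum_eq_single j]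
    · rw [hwb, _root_.map_sub, _root_.map_one, _root_.map_mul, Matrix.sub_mulVec, Matrix.one_mulVec,
        ← Matrix.mulVec_mulVec, haev, hv j, Matrix.mulVec_zero, sub_zero]
    · intro k _ hkj
      rw [_root_.map_mul, ← Matrix.mulVec_mulVec, hbv k hkj, Matrix.mulVec_zero]
    · intro h; exact absurd (Finset.mem_univ j) h
  intro τ hτ
  have := hkey (Polynomial.X ^ τ * (w * b))
  rw [_root_.map_mul, _root_.map_pow, Polynomial.aeval_X, ← Matrix.mul_assoc, ← Matrix.mulVec_mulVec,
    hproj] at this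
  exact this
end

section
/- Let x ∈ ℝ^n with generalized-eigenspace components x_j = P_j x, fix a sensor i, and let w_1,…,w_r ∈ ℝ^{t+1} be such that each w_j lies in 𝒪_i(V^j), i.e., w_j = 𝒪_i v_j for some v_j ∈ V^j. Then 𝒪_i x = w_1 + ⋯ + w_r if and only if 𝒪_i x_j = w_j for every j = 1,…,r. (Lemma 4, claim 2: equivalence between full-state consistency and subspace-wise consistency.) -/
open Matrix Polynomial

private def phiAux {n p : ℕ} (C : Matrix (Fin p) (Fin n) ℝ) (i : Fin p) (u : Fin n → ℝ) :
    Matrix (Fin n) (Fin n) ℝ →ₗ[ℝ] ℝ where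
  toFun M := ((C * M).mulVec u) i
  map_add' M N := by simp [Matrix.mul_add, Matrix.add_mulVec]
  map_smul' c M := by simp [Matrix.mul_smul, Matrix.smul_mulVec]

private lemma phiAux_apply {n p : ℕ} (C : Matrix (Fin p) (Fin n) ℝ) (i : Fin p)
    (u : Fin n → ℝ) (M : Matrix (Fin n) (Fin n) ℝ) :
    phiAux C i u M = ((C * M).mulVec u) i := rfl

private lemma phiAux_sum {n p r : ℕ} (C : Matrix (Fin p) (Fin n) ℝ) (i : Fin p)
    (u : Fin r → Fin n → ℝ) (M : Matrix (Fin n) (Fin n) ℝ) :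
    phiAux C i (∑ j, u j) M = ∑ j, phiAux C i (u j) M := by
  simp only [phiAux_apply, Matrix.mulVec, dotProduct, Finset.sum_apply,
    Finset.mul_sum]
  exact Finset.sum_comm

private lemma phiAux_sub {n p : ℕ} (C : Matrix (Fin p) (Fin n) ℝ) (i : Fin p)
    (u v : Fin n → ℝ) (M : Matrix (Fin n) (Fin n) ℝ) :
    phiAux C i (u - v) M = phiAux C i u M - phiAux C i v M := by
  simp [phiAux_apply, Matrix.mulVec_sub]

private lemma extendAux {n p t : ℕ} (ht : n - 1 ≤ t)
    (A : Matrix (Fin n) (Fin n) ℝ) (C : Matrix (Fin p) (Fin n) ℝ) (i : Fin p)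
    (z : Fin n → ℝ)
    (h : ∀ τ : Fin (t + 1), phiAux C i z (A ^ (τ : ℕ)) = 0) :
    ∀ m : ℕ, phiAux C i z (A ^ m) = 0 := by
  intro m
  induction m using Nat.strong_induction_on with
  | _ m ih =>
    by_cases hm : m ≤ t
    · simpa using h ⟨m, Nat.lt_succ_of_le hm⟩
    · have hnm : n ≤ m := by omega
      have hdeg : A.charpoly.natDegree = n := by
        simpa using A.charpoly_natDegree_eq_dim
      have hsum : (0 : Matrix (Fin n) (Fin n) ℝ) =
          ∑ k ∈ Finset.range (n + 1), A.charpoly.coeff k • A ^ k := by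
        rw [← A.aeval_self_charpoly, aeval_eq_sum_range, hdeg]
      have hcoef : A.charpoly.coeff n = 1 := by
        have h2 := A.charpoly_monic.coeff_natDegree
        rwa [hdeg] at h2
      have hAn : A ^ n = -∑ k ∈ Finset.range n, A.charpoly.coeff k • A ^ k := by
        rw [Finset.sum_range_succ, hcoef, one_smul] at hsum
        linear_combination (norm := abel) -hsum
      have hAm : A ^ m = -∑ k ∈ Finset.range n, A.charpoly.coeff k • A ^ (m - n + k) := by
        have : A ^ m = A ^ (m - n) * A ^ n := by
          rw [← pow_add]; congr 1; omega
        rw [this, hAn, mul_neg, Finset.mul_sum]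
        congr 1
        refine Finset.sum_congr rfl fun k _ => ?_
        rw [Matrix.mul_smul, ← pow_add]
      rw [hAm, map_neg, map_sum]
      rw [Finset.sum_eq_zero, neg_zero]
      intro k hk
      have hk' : k < n := Finset.mem_range.mp hk
      rw [_root_.map_smul, ih (m - n + k) (by omega)]
      simp

private lemma killAux {n p : ℕ} (A : Matrix (Fin n) (Fin n) ℝ)
    (C : Matrix (Fin p) (Fin n) ℝ) (i : Fin p) (u : Fin n → ℝ) (g : ℝ[X])
    (hg : (aeval A g).mulVec u = 0) (f : ℝ[X]) :
    phiAux C i u (aeval A (f * g)) = 0 := by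
  rw [phiAux_apply, ← Matrix.mulVec_mulVec, _root_.map_mul, ← Matrix.mulVec_mulVec, hg,
    Matrix.mulVec_zero, Matrix.mulVec_zero]
  rfl

private lemma allPolyAux {n p : ℕ} (A : Matrix (Fin n) (Fin n) ℝ)
    (C : Matrix (Fin p) (Fin n) ℝ) (i : Fin p) (z : Fin n → ℝ)
    (h : ∀ m : ℕ, phiAux C i z (A ^ m) = 0) (f : ℝ[X]) :
    phiAux C i z (aeval A f) = 0 := by
  rw [aeval_eq_sum_range, map_sum]
  refine Finset.sum_eq_zero fun k _ => ?_
  rw [_root_.map_smul, h k]; simp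

private lemma mainAux {n p r : ℕ} (A : Matrix (Fin n) (Fin n) ℝ)
    (C : Matrix (Fin p) (Fin n) ℝ) (lam : Fin r → ℝ) (hlam : Function.Injective lam)
    (i : Fin p) (u : Fin r → Fin n → ℝ)
    (hu : ∀ j, ((A - lam j • 1) ^ n).mulVec (u j) = 0)
    (h : ∀ m : ℕ, phiAux C i (∑ j, u j) (A ^ m) = 0) :
    ∀ j, ∀ m : ℕ, phiAux C i (u j) (A ^ m) = 0 := by
  set pj : Fin r → ℝ[X] := fun j => (X - Polynomial.C (lam j)) ^ n with hpj
  have haev : ∀ j, (aeval A (pj j)).mulVec (u j) = 0 := by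
    intro j
    have : aeval A (pj j) = (A - lam j • 1) ^ n := by
      simp [hpj, Algebra.algebraMap_eq_smul_one]
    rw [this]; exact hu j
  intro j m
  set qj : ℝ[X] := ∏ k ∈ Finset.univ.erase j, pj k with hqj
  have hco : IsCoprime (pj j) qj := by
    refine IsCoprime.prod_right fun k hk => ?_
    have hne : lam j ≠ lam k := fun hh => (Finset.mem_erase.mp hk).1 (hlam hh).symm
    exact (Polynomial.isCoprime_X_sub_C_of_isUnit_sub
      ((sub_ne_zero_of_ne hne).isUnit)).pow
  obtain ⟨a, b, hab⟩ := hco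
  have hq0 : ∀ f : ℝ[X], phiAux C i (u j) (aeval A (f * qj)) = 0 := by
    intro f
    have hz : phiAux C i (∑ k, u k) (aeval A (f * qj)) = 0 := allPolyAux A C i _ h _
    rw [phiAux_sum] at hz
    have hk0 : ∀ k ∈ Finset.univ, k ≠ j → phiAux C i (u k) (aeval A (f * qj)) = 0 := by
      intro k _ hkj
      obtain ⟨c, hc⟩ : pj k ∣ qj :=
        Finset.dvd_prod_of_mem _ (Finset.mem_erase.mpr ⟨hkj, Finset.mem_univ k⟩)
      have : f * qj = (f * c) * pj k := by rw [hc]; ring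
      rw [this]
      exact killAux A C i (u k) (pj k) (haev k) (f * c)
    rw [Finset.sum_eq_single j hk0 (fun hj => absurd (Finset.mem_univ j) hj)] at hz
    exact hz
  have hsplit : (X : ℝ[X]) ^ m = (X ^ m * a) * pj j + (X ^ m * b) * qj := by
    conv_lhs => rw [← mul_one ((X : ℝ[X]) ^ m), ← hab]
    rw [mul_add, ← mul_assoc, ← mul_assoc]
  have : phiAux C i (u j) (A ^ m) = phiAux C i (u j) (aeval A ((X : ℝ[X]) ^ m)) := by
    simp
  rw [this, hsplit, map_add, map_add, killAux A C i (u j) (pj j) (haev j) (X ^ m * a),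
    hq0 (X ^ m * b), add_zero]

/-- Lemma 4, claim 2: for a sensor `i`, the full-state response equation
`𝒪_i x = w_1 + ⋯ + w_r`, where each `w j` is the response of some vector of the `j`-th
generalized eigenspace, holds iff the subspace-wise equations `𝒪_i (P_j x) = w_j`
hold for every `j`. -/
theorem full_consistency_iff_subspace_consistency
    {n p r t : ℕ} (ht : n - 1 ≤ t)
    (A : Matrix (Fin n) (Fin n) ℝ) (C : Matrix (Fin p) (Fin n) ℝ)
    (lam : Fin r → ℝ) (hlam : Function.Injective lam)
    (heig : ∀ j, ∃ w : Fin n → ℝ, w ≠ 0 ∧ A.mulVec w = lam j • w)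
    (P : Fin r → Matrix (Fin n) (Fin n) ℝ)
    (hPmem : ∀ j, ∀ x : Fin n → ℝ, ((A - lam j • 1) ^ n).mulVec ((P j).mulVec x) = 0)
    (hPsum : ∀ x : Fin n → ℝ, ∑ j, (P j).mulVec x = x)
    (i : Fin p) (x : Fin n → ℝ)
    (w : Fin r → Fin (t + 1) → ℝ)
    (hw : ∀ j, ∃ v : Fin n → ℝ, ((A - lam j • 1) ^ n).mulVec v = 0 ∧
        w j = fun τ : Fin (t + 1) => ((C * A ^ (τ : ℕ)).mulVec v) i) :
    ((fun τ : Fin (t + 1) => ((C * A ^ (τ : ℕ)).mulVec x) i) = ∑ j, w j) ↔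
      (∀ j, (fun τ : Fin (t + 1) =>
          ((C * A ^ (τ : ℕ)).mulVec ((P j).mulVec x)) i) = w j) := by
  constructor
  · intro h j
    choose v hv1 hv2 using hw
    set u : Fin r → Fin n → ℝ := fun k => (P k).mulVec x - v k with hudef
    have hu : ∀ k, ((A - lam k • 1) ^ n).mulVec (u k) = 0 := by
      intro k
      simp [hudef, Matrix.mulVec_sub, hPmem, hv1]
    have hwin : ∀ τ : Fin (t + 1), phiAux C i (∑ k, u k) (A ^ (τ : ℕ)) = 0 := by
      intro τ
      rw [phiAux_sum]
      have h1 : ((C * A ^ (τ : ℕ)).mulVec x) i = ∑ k, w k τ := by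
        have := congrFun h τ
        simpa [Finset.sum_apply] using this
      have : ∀ k, phiAux C i (u k) (A ^ (τ : ℕ)) =
          ((C * A ^ (τ : ℕ)).mulVec ((P k).mulVec x)) i - w k τ := by
        intro k
        simp only [phiAux_apply, hudef, Matrix.mulVec_sub, Pi.sub_apply]
        rw [hv2 k]
      rw [Finset.sum_congr rfl fun k _ => this k, Finset.sum_sub_distrib]
      have h2 : ∑ k, ((C * A ^ (τ : ℕ)).mulVec ((P k).mulVec x)) i =
          ((C * A ^ (τ : ℕ)).mulVec x) i := by
        have := phiAux_sum C i (fun k => (P k).mulVec x) (A ^ (τ : ℕ))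
        rw [hPsum x] at this
        simpa [phiAux_apply] using this.symm
      rw [h2, h1, sub_self]
    have hall := extendAux ht A C i _ hwin
    have hj := mainAux A C lam hlam i u hu hall j
    funext τ
    have := hj (τ : ℕ)
    simp only [phiAux_apply, hudef, Matrix.mulVec_sub, Pi.sub_apply] at this
    have h3 : ((C * A ^ (τ : ℕ)).mulVec ((P j).mulVec x)) i
        = ((C * A ^ (τ : ℕ)).mulVec (v j)) i := sub_eq_zero.mp this
    rw [h3, hv2 j]
  · intro h
    funext τ
    have h2 : ((C * A ^ (τ : ℕ)).mulVec x) i =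
        ∑ k, ((C * A ^ (τ : ℕ)).mulVec ((P k).mulVec x)) i := by
      have := phiAux_sum C i (fun k => (P k).mulVec x) (A ^ (τ : ℕ))
      rw [hPsum x] at this
      simpa [phiAux_apply] using this
    rw [h2, Finset.sum_apply]
    exact Finset.sum_congr rfl fun k _ => congrFun (h k) τ
end

section
/- Let A ∈ ℂ^{n×n}, let λ be an eigenvalue of A, and let C_i ∈ ℂ^{1×n}. Suppose λ is observable with respect to sensor i, i.e., the only v ∈ ℂ^n with Av = λv and C_i v = 0 is v = 0. Then the observability map of sensor i is injective on the generalized eigenspace of λ: if x ∈ ker((A − λ I)^n) satisfies C_i A^τ x = 0 for all 0 ≤ τ ≤ n−1, then x = 0. (Injectivity of the per-sensor observability map on an observed generalized eigenspace.) -/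
open Matrix

/-- if an eigenvalue `lam` of `A` is observable with respect to sensor `i`
(with row vector `Ci`), then the observability map of sensor `i` is injective on the
generalized eigenspace of `lam`. -/
theorem obs_injective_on_generalized_eigenspace
    {n : ℕ} (A : Matrix (Fin n) (Fin n) ℂ) (Ci : Fin n → ℂ) (lam : ℂ)
    (heig : ∃ w : Fin n → ℂ, w ≠ 0 ∧ A.mulVec w = lam • w)
    (hobs : ∀ v : Fin n → ℂ, A.mulVec v = lam • v → Ci ⬝ᵥ v = 0 → v = 0)
    (x : Fin n → ℂ)
    (hx : ((A - lam • 1) ^ n).mulVec x = 0)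
    (hzero : ∀ τ < n, Ci ⬝ᵥ (A ^ τ).mulVec x = 0) :
    x = 0 := by
  set N : Matrix (Fin n) (Fin n) ℂ := A - lam • 1 with hN
  -- step 1: Ci ⬝ᵥ (A^τ * N^k) x = 0 whenever τ + k < n
  have key : ∀ k τ, τ + k < n → Ci ⬝ᵥ (A ^ τ * N ^ k).mulVec x = 0 := by
    intro k
    induction k with
    | zero => intro τ hτ; simpa using hzero τ (by omega)
    | succ k ih =>
      intro τ hτ
      have hdecomp : A ^ τ * N ^ (k + 1)
          = A ^ (τ + 1) * N ^ k - lam • (A ^ τ * N ^ k) := by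
        rw [pow_succ A, pow_succ' N, hN, sub_mul, mul_sub, mul_assoc]
        congr 1
        rw [smul_mul_assoc, one_mul, Matrix.mul_smul]
      rw [hdecomp, sub_mulVec, dotProduct_sub, smul_mulVec,
        dotProduct_smul, ih (τ + 1) (by omega), ih τ (by omega)]
      simp
  -- step 2: induction to kill powers of N
  have main : ∀ k, k ≤ n → (N ^ k).mulVec x = 0 → x = 0 := by
    intro k
    induction k with
    | zero => intro _ h; simpa [one_mulVec] using h
    | succ k ih =>
      intro hk h
      set v : Fin n → ℂ := (N ^ k).mulVec x with hv
      have hNv : N.mulVec v = 0 := by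
        rw [hv, mulVec_mulVec, ← pow_succ']
        exact h
      have hAv : A.mulVec v = lam • v := by
        have := hNv
        rw [hN, sub_mulVec, smul_mulVec, one_mulVec, sub_eq_zero] at this
        exact this
      have hCiv : Ci ⬝ᵥ v = 0 := by
        have := key k 0 (by omega)
        simpa [hv] using this
      have hv0 : v = 0 := hobs v hAv hCiv
      exact ih (by omega) hv0
  exact main n le_rfl hx
end

section
/- Fix a subspace index j and a sensor i such that λ_j is observable with respect to sensor i. Then for any data vectors Y_1,…,Y_p ∈ ℝ^{t+1}, there is at most one x_j ∈ V^j that agrees with sensor i. (Uniqueness of the substate voted for by each observing sensor, underlying the pre-processing and threshold-voting steps.) -/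
open Matrix

noncomputable section

/-- Generalized eigenspace of `A` for the eigenvalue `μ`: `ker((A - μ I)^n)`. -/
def genEig {n : ℕ} (A : Matrix (Fin n) (Fin n) ℝ) (μ : ℝ) : Set (Fin n → ℝ) :=
  {x | ((A - μ • 1) ^ n).mulVec x = 0}

/-- Observability map of sensor `i` over horizon `t`: `(𝒪_i x)_τ = C_i A^τ x`. -/
def obsMap {n p : ℕ} (t : ℕ) (A : Matrix (Fin n) (Fin n) ℝ)
    (C : Matrix (Fin p) (Fin n) ℝ) (i : Fin p) (x : Fin n → ℝ) : Fin (t + 1) → ℝ :=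
  fun τ => ((C * A ^ (τ : ℕ)).mulVec x) i

/-- `x` is a plausible state for the data `Y`: some set `Γ` of `p - s` sensors is
exactly explained by `x`. -/
def plausible {n p : ℕ} (t : ℕ) (A : Matrix (Fin n) (Fin n) ℝ)
    (C : Matrix (Fin p) (Fin n) ℝ) (s : ℕ) (Y : Fin p → Fin (t + 1) → ℝ)
    (x : Fin n → ℝ) : Prop :=
  ∃ Γ : Finset (Fin p), Γ.card = p - s ∧ ∀ i ∈ Γ, obsMap t A C i x = Y i

/-- The eigenvalue `μ` of `A` is observable with respect to sensor `i` (over `ℂ`). -/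
def eigObs {n p : ℕ} (A : Matrix (Fin n) (Fin n) ℝ)
    (C : Matrix (Fin p) (Fin n) ℝ) (μ : ℝ) (i : Fin p) : Prop :=
  ∀ v : Fin n → ℂ, (A.map Complex.ofReal).mulVec v = (μ : ℂ) • v →
    ((C.map Complex.ofReal).mulVec v) i = 0 → v = 0

/-- The substate `xj ∈ V^j` agrees with sensor `i`: some choice of substates in the
other generalized eigenspaces makes the total response match the data `Y i`. -/
def agrees {n p r : ℕ} (t : ℕ) (A : Matrix (Fin n) (Fin n) ℝ)
    (C : Matrix (Fin p) (Fin n) ℝ) (lam : Fin r → ℝ)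
    (Y : Fin p → Fin (t + 1) → ℝ) (j : Fin r) (xj : Fin n → ℝ) (i : Fin p) : Prop :=
  ∃ z : Fin r → Fin n → ℝ, (∀ k, k ≠ j → z k ∈ genEig A (lam k)) ∧
    obsMap t A C i (xj + ∑ k ∈ Finset.univ.erase j, z k) = Y i

/-- `X_j`: the substates in `V^j` that agree with at least `q + 1 - s` sensors for
which `λ_j` is observable. -/
def Xset {n p r : ℕ} (t : ℕ) (A : Matrix (Fin n) (Fin n) ℝ)
    (C : Matrix (Fin p) (Fin n) ℝ) (lam : Fin r → ℝ)
    (Y : Fin p → Fin (t + 1) → ℝ) (s q : ℕ) (j : Fin r) : Set (Fin n → ℝ) :=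
  {xj | xj ∈ genEig A (lam j) ∧
    q + 1 - s ≤ {i : Fin p | eigObs A C (lam j) i ∧ agrees t A C lam Y j xj i}.ncard}

/-- `I_j(xj)`: the sensors that do not agree with the substate `xj`. -/
def Iset {n p r : ℕ} (t : ℕ) (A : Matrix (Fin n) (Fin n) ℝ)
    (C : Matrix (Fin p) (Fin n) ℝ) (lam : Fin r → ℝ)
    (Y : Fin p → Fin (t + 1) → ℝ) (j : Fin r) (xj : Fin n → ℝ) : Set (Fin p) :=
  {i | ¬ agrees t A C lam Y j xj i}

open Polynomial
lemma aux_mulVec_sum {n : ℕ} (M : Matrix (Fin n) (Fin n) ℝ) {ι : Type*} (s : Finset ι)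
    (v : ι → Fin n → ℝ) : M.mulVec (∑ k ∈ s, v k) = ∑ k ∈ s, M.mulVec (v k) := by
  simpa only [Matrix.mulVecLin_apply] using map_sum M.mulVecLin v s

lemma aux_aeval_X_sub_C {n : ℕ} (A : Matrix (Fin n) (Fin n) ℝ) (μ : ℝ) :
    (aeval A) (X - Polynomial.C μ) = A - μ • 1 := by
  simp [Algebra.algebraMap_eq_smul_one]

lemma aux_charpoly_sub_natDegree {n : ℕ} (hn : 0 < n) (A : Matrix (Fin n) (Fin n) ℝ) :
    (A.charpoly - X ^ n).natDegree < n := by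
  by_cases h : A.charpoly - X ^ n = 0
  · simp [h, hn]
  · rw [Polynomial.natDegree_lt_iff_degree_lt h]
    have hd : A.charpoly.degree = (n : WithBot ℕ) := by
      have := A.charpoly_degree_eq_dim
      simpa using this
    have := Polynomial.degree_sub_lt (p := A.charpoly) (q := X ^ n)
      (by simp [hd]) (A.charpoly_monic.ne_zero)
      (by simp [A.charpoly_monic.leadingCoeff, Polynomial.monic_X_pow n])
    rwa [hd] at this

/-- if `λ_j` is observable with respect to sensor `i`, then at most one
substate in `V^j` agrees with sensor `i`. -/
theorem substate_unique_per_observing_sensor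
    {n p r t : ℕ} (ht : n - 1 ≤ t)
    (A : Matrix (Fin n) (Fin n) ℝ) (C : Matrix (Fin p) (Fin n) ℝ)
    (lam : Fin r → ℝ) (hlam : Function.Injective lam)
    (heig : ∀ j, ∃ w : Fin n → ℝ, w ≠ 0 ∧ A.mulVec w = lam j • w)
    (Y : Fin p → Fin (t + 1) → ℝ)
    (j : Fin r) (i : Fin p) (hobs : eigObs A C (lam j) i) :
    ∀ xj ∈ genEig A (lam j), ∀ xj' ∈ genEig A (lam j),
      agrees t A C lam Y j xj i → agrees t A C lam Y j xj' i → xj = xj' := by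
  rintro xj hxj xj' hxj' ⟨z, hz, hY1⟩ ⟨z', hz', hY2⟩
  rcases Nat.eq_zero_or_pos n with hn | hn
  · exact funext fun k => absurd k.isLt (by omega)
  -- the difference vector
  set d : Fin n → ℝ :=
    (xj + ∑ k ∈ Finset.univ.erase j, z k) - (xj' + ∑ k ∈ Finset.univ.erase j, z' k) with hd_def
  -- the linear functional M ↦ (C_i) (M d)
  set L : Matrix (Fin n) (Fin n) ℝ →ₗ[ℝ] ℝ :=
    { toFun := fun M => ((C * M).mulVec d) i
      map_add' := fun M N => by simp [Matrix.mul_add, Matrix.add_mulVec]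
      map_smul' := fun a M => by simp [Matrix.mul_smul, Matrix.smul_mulVec] } with hL_def
  have hLapp : ∀ M : Matrix (Fin n) (Fin n) ℝ, L M = ((C * M).mulVec d) i := fun _ => rfl
  have hLd : ∀ τ : ℕ, τ ≤ t → L (A ^ τ) = 0 := by
    intro τ hτ
    have h1 := congrFun hY1 ⟨τ, by omega⟩
    have h2 := congrFun hY2 ⟨τ, by omega⟩
    simp only [obsMap] at h1 h2
    rw [hLapp, hd_def, Matrix.mulVec_sub, Pi.sub_apply, h1, h2, sub_self]
  have hLpow : ∀ τ : ℕ, L (A ^ τ) = 0 := by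
    intro τ
    induction τ using Nat.strong_induction_on with
    | _ τ ih =>
      by_cases hτ : τ ≤ t
      · exact hLd τ hτ
      · have hτn : n ≤ τ := by omega
        set q : Polynomial ℝ := A.charpoly - X ^ n with hq_def
        have hqdeg : q.natDegree < n := aux_charpoly_sub_natDegree hn A
        have hAn : (A : Matrix (Fin n) (Fin n) ℝ) ^ n = -(aeval A) q := by
          have h := A.aeval_self_charpoly
          have hc : A.charpoly = q + X ^ n := by ring
          rw [hc, map_add, Polynomial.aeval_X_pow] at h
          linear_combination (norm := abel) h
        have hsplit : A ^ τ = A ^ (τ - n) * A ^ n := by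
          rw [← pow_add]; congr 1; omega
        set L' : Matrix (Fin n) (Fin n) ℝ →ₗ[ℝ] ℝ :=
          L.comp (LinearMap.mulLeft ℝ (A ^ (τ - n))) with hL'_def
        have : L (A ^ τ) = L' (A ^ n) := by
          rw [hsplit]; rfl
        rw [this, hAn, map_neg, Polynomial.aeval_eq_sum_range' hqdeg, map_sum]
        rw [neg_eq_zero]
        apply Finset.sum_eq_zero
        intro k hk
        have hk' : k < n := Finset.mem_range.mp hk
        rw [LinearMap.map_smul, smul_eq_zero]
        right
        have : L' (A ^ k) = L (A ^ (τ - n + k)) := by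
          rw [pow_add]; rfl
        rw [this]
        exact ih _ (by omega)
  have hLaeval : ∀ q : Polynomial ℝ, L ((aeval A) q) = 0 := by
    intro q
    rw [Polynomial.aeval_eq_sum_range, map_sum]
    apply Finset.sum_eq_zero
    intro k _
    rw [LinearMap.map_smul, hLpow k, smul_zero]
  -- the annihilating polynomial of the other components
  set f : Polynomial ℝ := ∏ k ∈ Finset.univ.erase j, (X - Polynomial.C (lam k)) ^ n with hf_def
  set u : Fin n → ℝ := xj - xj' with hu_def
  have hu_gen : ((A - lam j • 1) ^ n).mulVec u = 0 := by
    rw [hu_def, Matrix.mulVec_sub, hxj, hxj', sub_self]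
  set w : Fin n → ℝ := ((aeval A) f).mulVec u with hw_def
  have hfd : ((aeval A) f).mulVec d = w := by
    have hdu : d = u + ∑ k ∈ Finset.univ.erase j, (z k - z' k) := by
      rw [hd_def, hu_def, Finset.sum_sub_distrib]; abel
    rw [hdu, Matrix.mulVec_add, aux_mulVec_sum, hw_def]
    have hzero : ∀ k ∈ Finset.univ.erase j,
        ((aeval A) f).mulVec (z k - z' k) = 0 := by
      intro k hk
      have hkj : k ≠ j := Finset.ne_of_mem_erase hk
      have hfactor : f = (∏ k' ∈ (Finset.univ.erase j).erase k,
          (X - Polynomial.C (lam k')) ^ n) * (X - Polynomial.C (lam k)) ^ n := by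
        rw [hf_def, ← Finset.mul_prod_erase _ _ hk, mul_comm]
      rw [hfactor, _root_.map_mul, ← Matrix.mulVec_mulVec]
      have : ((aeval A) ((X - Polynomial.C (lam k)) ^ n)).mulVec (z k - z' k) = 0 := by
        rw [map_pow, aux_aeval_X_sub_C, Matrix.mulVec_sub,
          hz k hkj, hz' k hkj, sub_self]
      rw [this, Matrix.mulVec_zero]
    rw [Finset.sum_congr rfl hzero]
    simp
  have hCw : ∀ q : Polynomial ℝ, (C.mulVec (((aeval A) q).mulVec w)) i = 0 := by
    intro q
    have : ((aeval A) q).mulVec w = ((aeval A) (q * f)).mulVec d := by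
      rw [← hfd, Matrix.mulVec_mulVec, _root_.map_mul]
    rw [this, Matrix.mulVec_mulVec]
    exact hLaeval (q * f)
  have hw_gen : ((A - lam j • 1) ^ n).mulVec w = 0 := by
    have h1 : ((A - lam j • 1) ^ n) * (aeval A) f = (aeval A) f * ((A - lam j • 1) ^ n) := by
      rw [← aux_aeval_X_sub_C A (lam j), ← map_pow, ← _root_.map_mul, ← _root_.map_mul, mul_comm]
    rw [hw_def, Matrix.mulVec_mulVec, h1, ← Matrix.mulVec_mulVec, hu_gen, Matrix.mulVec_zero]
  -- w = 0 by observability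
  have hw0 : w = 0 := by
    by_contra hw
    have hP : ∃ m, ((A - lam j • 1) ^ m).mulVec w = 0 := ⟨n, hw_gen⟩
    set m := Nat.find hP with hm_def
    have hm : ((A - lam j • 1) ^ m).mulVec w = 0 := Nat.find_spec hP
    have hm1 : 1 ≤ m := by
      rcases Nat.eq_zero_or_pos m with h0 | h
      · exfalso; apply hw
        have := hm; rw [h0, pow_zero, Matrix.one_mulVec] at this; exact this
      · exact h
    set v : Fin n → ℝ := ((A - lam j • 1) ^ (m - 1)).mulVec w with hv_def
    have hv0 : v ≠ 0 := Nat.find_min hP (by omega)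
    have hAv : (A - lam j • 1).mulVec v = 0 := by
      rw [hv_def, Matrix.mulVec_mulVec, ← pow_succ']
      have : m - 1 + 1 = m := by omega
      rw [this]; exact hm
    have hAv' : A.mulVec v = lam j • v := by
      have h := hAv
      rw [Matrix.sub_mulVec, sub_eq_zero] at h
      rw [h, Matrix.smul_mulVec, Matrix.one_mulVec]
    have hCv : (C.mulVec v) i = 0 := by
      have := hCw ((X - Polynomial.C (lam j)) ^ (m - 1))
      rwa [map_pow, aux_aeval_X_sub_C, ← hv_def] at this
    set vc : Fin n → ℂ := fun k => (v k : ℂ) with hvc_def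
    have h1 : (A.map Complex.ofReal).mulVec vc = ((lam j : ℂ)) • vc := by
      funext k
      have hk := congrFun hAv' k
      simp only [Matrix.mulVec, dotProduct, Pi.smul_apply, smul_eq_mul] at hk ⊢
      simp only [Matrix.map_apply, hvc_def]
      push_cast
      exact_mod_cast congrArg (Complex.ofReal) hk
    have h2 : ((C.map Complex.ofReal).mulVec vc) i = 0 := by
      have hk := hCv
      simp only [Matrix.mulVec, dotProduct] at hk ⊢
      simp only [Matrix.map_apply, hvc_def]
      push_cast
      exact_mod_cast congrArg (Complex.ofReal) hk
    have := hobs vc h1 h2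
    apply hv0
    funext k
    have hk2 := congrFun this k
    simp only [hvc_def, Pi.zero_apply] at hk2
    exact_mod_cast hk2
  -- conclude u = 0 by coprimality
  have hcop : IsCoprime ((X - Polynomial.C (lam j)) ^ n) f := by
    apply IsCoprime.pow_left
    rw [hf_def]
    apply IsCoprime.prod_right
    intro k hk
    apply IsCoprime.pow_right
    exact Polynomial.pairwise_coprime_X_sub_C hlam (Finset.ne_of_mem_erase hk).symm
  obtain ⟨a, b, hab⟩ := hcop
  have hu0 : u = 0 := by
    have h := congrArg (aeval A) hab
    rw [map_add, _root_.map_mul, _root_.map_mul, _root_.map_one, map_pow, aux_aeval_X_sub_C] at h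
    have h2 := congrArg (fun M => M.mulVec u) h
    rw [Matrix.add_mulVec, Matrix.one_mulVec, ← Matrix.mulVec_mulVec,
      ← Matrix.mulVec_mulVec, hu_gen, Matrix.mulVec_zero, ← hw_def, hw0,
      Matrix.mulVec_zero, add_zero] at h2
    exact h2.symm
  rw [hu_def, sub_eq_zero] at hu0
  exact hu0
end
end

section
/- Assume the system is 2s-eigenvalue observable (every eigenvalue λ_j is observable with respect to at least 2s+1 sensors) and the data Y_1,…,Y_p are generated under at most s attacks from x_true. Then for every subspace index j: (a) the true substate P_j x_true agrees with at least s+1 sensors in Obs_j; (b) every x_j ∈ V^j with x_j ≠ P_j x_true agrees with at most s sensors in Obs_j. Consequently, P_j x_true is the unique element of V^j receiving the strict majority of votes among the sensors in Obs_j. (Lemma 4, claim 4: correctness of majority voting.) -/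
open Matrix

noncomputable section

open Polynomial

section AuxLemmas
variable {n p : ℕ}
lemma sum_mulVec' {ι : Type*} (s : Finset ι) (M : ι → Matrix (Fin p) (Fin n) ℝ)
    (v : Fin n → ℝ) : (∑ k ∈ s, M k).mulVec v = ∑ k ∈ s, (M k).mulVec v := by
  funext x
  simp [Matrix.mulVec, dotProduct, Matrix.sum_apply, Finset.sum_mul,
    Finset.sum_apply]
  rw [Finset.sum_comm]
lemma mulVec_sum' {ι : Type*} (s : Finset ι) (M : Matrix (Fin p) (Fin n) ℝ)
    (v : ι → Fin n → ℝ) : M.mulVec (∑ k ∈ s, v k) = ∑ k ∈ s, M.mulVec (v k) := by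
  funext x
  simp [Matrix.mulVec, dotProduct, Finset.sum_apply, Finset.mul_sum]
  rw [Finset.sum_comm]
lemma genEig_sub {A : Matrix (Fin n) (Fin n) ℝ} {μ : ℝ} {x y : Fin n → ℝ}
    (hx : x ∈ genEig A μ) (hy : y ∈ genEig A μ) : x - y ∈ genEig A μ := by
  simp only [genEig, Set.mem_setOf_eq] at *
  rw [Matrix.mulVec_sub, hx, hy, sub_zero]
lemma aeval_X_sub_C' (A : Matrix (Fin n) (Fin n) ℝ) (μ : ℝ) :
    aeval A (X - Polynomial.C μ) = A - μ • 1 := by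
  rw [map_sub, aeval_X, aeval_C, Algebra.algebraMap_eq_smul_one]
end AuxLemmas

lemma key_zero {n p r t : ℕ} {A : Matrix (Fin n) (Fin n) ℝ}
    {C : Matrix (Fin p) (Fin n) ℝ} {lam : Fin r → ℝ}
    (hlam : Function.Injective lam) (ht : n - 1 ≤ t) {j : Fin r} {i : Fin p}
    (hobs : eigObs A C (lam j) i)
    {e : Fin r → Fin n → ℝ} (he : ∀ k, e k ∈ genEig A (lam k))
    (hzero : ∀ τ : Fin (t + 1), ((C * A ^ (τ : ℕ)).mulVec (∑ k, e k)) i = 0) :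
    e j = 0 := by
  rcases Nat.eq_zero_or_pos n with hn | hn
  · subst hn; exact Subsingleton.elim _ _
  set d : Fin n → ℝ := ∑ k, e k with hd
  have hnt : n ≤ t + 1 := by omega
  -- expansion of aeval through the linear structure
  have expand : ∀ q : ℝ[X],
      (C.mulVec ((aeval A q).mulVec d)) i
        = ∑ k ∈ Finset.range (q.natDegree + 1),
            q.coeff k * (C.mulVec ((A ^ k).mulVec d)) i := by
    intro q
    conv_lhs => rw [aeval_eq_sum_range]
    rw [sum_mulVec', mulVec_sum']
    rw [Finset.sum_apply]
    refine Finset.sum_congr rfl fun k _ => ?_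
    rw [Matrix.smul_mulVec, Matrix.mulVec_smul]
    simp [smul_eq_mul]
  have hdegc : A.charpoly.natDegree = n := by
    simpa using A.charpoly_natDegree_eq_dim
  -- all powers annihilate
  have hpow : ∀ m : ℕ, (C.mulVec ((A ^ m).mulVec d)) i = 0 := by
    intro m
    induction m using Nat.strong_induction_on with
    | _ m IH =>
      by_cases hm : m ≤ t
      · have h := hzero ⟨m, Nat.lt_succ_of_le hm⟩
        rw [← Matrix.mulVec_mulVec] at h
        exact h
      · have hmn : n ≤ m := by omega
        rw [Matrix.pow_eq_aeval_mod_charpoly, expand]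
        refine Finset.sum_eq_zero fun k hk => ?_
        have hkdeg : k ≤ (X ^ m %ₘ A.charpoly).natDegree := by
          simpa [Nat.lt_succ_iff] using Finset.mem_range.1 hk
        by_cases hq0 : (X ^ m %ₘ A.charpoly) = 0
        · simp [hq0]
        · have hdlt : (X ^ m %ₘ A.charpoly).natDegree < n := by
            have h1 := Polynomial.degree_modByMonic_lt (X ^ m) A.charpoly_monic
            rw [Polynomial.degree_eq_natDegree A.charpoly_monic.ne_zero,
              Polynomial.degree_eq_natDegree hq0, hdegc] at h1
            exact_mod_cast h1
          have : k < m := by omega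
          rw [IH k this, mul_zero]
  have hall : ∀ q : ℝ[X], (C.mulVec ((aeval A q).mulVec d)) i = 0 := by
    intro q
    rw [expand]
    exact Finset.sum_eq_zero fun k _ => by rw [hpow k, mul_zero]
  -- the product polynomial
  set Q : ℝ[X] := ∏ k ∈ Finset.univ.erase j, (X - Polynomial.C (lam k)) ^ n with hQ
  have hkill : ∀ k, k ≠ j → (aeval A Q).mulVec (e k) = 0 := by
    intro k hk
    have hk' : k ∈ Finset.univ.erase j := Finset.mem_erase.2 ⟨hk, Finset.mem_univ k⟩
    have hfac : (∏ l ∈ (Finset.univ.erase j).erase k, (X - Polynomial.C (lam l)) ^ n)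
        * (X - Polynomial.C (lam k)) ^ n = Q :=
      Finset.prod_erase_mul _ _ hk'
    rw [← hfac, _root_.map_mul, ← Matrix.mulVec_mulVec, map_pow, aeval_X_sub_C',
      he k, Matrix.mulVec_zero]
  have hdQ : ∀ q : ℝ[X], (C.mulVec ((aeval A (q * Q)).mulVec (e j))) i = 0 := by
    intro q
    have hsum : (aeval A (q * Q)).mulVec d = (aeval A (q * Q)).mulVec (e j) := by
      rw [hd, mulVec_sum']
      rw [Finset.sum_eq_single j]
      · intro k _ hk
        rw [_root_.map_mul, ← Matrix.mulVec_mulVec, hkill k hk, Matrix.mulVec_zero]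
      · intro h; exact absurd (Finset.mem_univ j) h
    rw [← hsum]; exact hall (q * Q)
  set u : Fin n → ℝ := (aeval A Q).mulVec (e j) with hu
  have hej : ((A - lam j • 1) ^ n).mulVec (e j) = 0 := he j
  have huV : ((A - lam j • 1) ^ n).mulVec u = 0 := by
    rw [hu, ← aeval_X_sub_C' A (lam j), ← map_pow, Matrix.mulVec_mulVec, ← _root_.map_mul,
      mul_comm, _root_.map_mul, ← Matrix.mulVec_mulVec, map_pow, aeval_X_sub_C', hej,
      Matrix.mulVec_zero]
  have hCu : ∀ m : ℕ, (C.mulVec (((A - lam j • 1) ^ m).mulVec u)) i = 0 := by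
    intro m
    have h := hdQ ((X - Polynomial.C (lam j)) ^ m)
    rw [_root_.map_mul, map_pow, aeval_X_sub_C', ← Matrix.mulVec_mulVec] at h
    exact h
  have hu0 : u = 0 := by
    by_contra hu0
    have hex : ∃ m, ((A - lam j • 1) ^ m).mulVec u = 0 := ⟨n, huV⟩
    have hm0 : ((A - lam j • 1) ^ Nat.find hex).mulVec u = 0 := Nat.find_spec hex
    have hm0pos : 0 < Nat.find hex := by
      rcases Nat.eq_zero_or_pos (Nat.find hex) with h | h
      · exfalso; apply hu0
        rw [h, pow_zero, Matrix.one_mulVec] at hm0; exact hm0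
      · exact h
    set w : Fin n → ℝ := ((A - lam j • 1) ^ (Nat.find hex - 1)).mulVec u with hw
    have hwne : w ≠ 0 := Nat.find_min hex (by omega)
    have hAw : (A - lam j • 1).mulVec w = 0 := by
      rw [hw, Matrix.mulVec_mulVec, ← pow_succ']
      have hone : Nat.find hex - 1 + 1 = Nat.find hex := by omega
      rw [hone]; exact hm0
    have hAw' : A.mulVec w = lam j • w := by
      rw [Matrix.sub_mulVec, Matrix.smul_mulVec, Matrix.one_mulVec,
        sub_eq_zero] at hAw
      exact hAw
    have hCw : (C.mulVec w) i = 0 := hCu (Nat.find hex - 1)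
    set v : Fin n → ℂ := fun x => ((w x : ℝ) : ℂ) with hv
    have hre : ∀ x, ∑ y, A x y * w y = lam j * w x := by
      intro x
      have := congrFun hAw' x
      simpa [Matrix.mulVec, dotProduct, smul_eq_mul] using this
    have hv1 : (A.map Complex.ofReal).mulVec v = ((lam j : ℝ) : ℂ) • v := by
      funext x
      show ∑ y, (A.map Complex.ofReal) x y * v y = ((lam j : ℝ) : ℂ) * v x
      simp only [Matrix.map_apply, hv]
      rw [← Complex.ofReal_mul, ← hre x]
      push_cast
      rfl
    have hv2 : ((C.map Complex.ofReal).mulVec v) i = 0 := by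
      show ∑ y, (C.map Complex.ofReal) i y * v y = 0
      simp only [Matrix.map_apply, hv]
      have : ∑ y, C i y * w y = 0 := by
        simpa [Matrix.mulVec, dotProduct] using hCw
      rw [show (0 : ℂ) = ((0 : ℝ) : ℂ) by norm_num, ← this]
      push_cast
      rfl
    have hv0 := hobs v hv1 hv2
    apply hwne
    funext x
    have := congrFun hv0 x
    simpa [hv, Complex.ofReal_eq_zero] using this
  -- coprimality and conclusion
  have hcop : IsCoprime ((X - Polynomial.C (lam j)) ^ n) Q := by
    rw [hQ]
    refine IsCoprime.prod_right fun k hk => ?_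
    have hne : j ≠ k := fun h => (Finset.mem_erase.1 hk).1 h.symm
    exact ((Polynomial.pairwise_coprime_X_sub_C hlam hne).pow)
  obtain ⟨a, b, hab⟩ := hcop
  have hfinal : e j = (aeval A (a * (X - Polynomial.C (lam j)) ^ n + b * Q)).mulVec (e j) := by
    rw [hab, _root_.map_one, Matrix.one_mulVec]
  rw [map_add, _root_.map_mul, _root_.map_mul, Matrix.add_mulVec, ← Matrix.mulVec_mulVec,
    ← Matrix.mulVec_mulVec, map_pow, aeval_X_sub_C', hej, ← hu, hu0,
    Matrix.mulVec_zero, Matrix.mulVec_zero, add_zero] at hfinal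
  exact hfinal


/-- Lemma 4, claim 4: correctness of majority voting under
`2s`-eigenvalue observability. -/
theorem majority_voting_correct
    {n p r s t : ℕ} (hsp : s ≤ p) (ht : n - 1 ≤ t)
    (A : Matrix (Fin n) (Fin n) ℝ) (C : Matrix (Fin p) (Fin n) ℝ)
    (lam : Fin r → ℝ) (hlam : Function.Injective lam)
    (heig : ∀ j, ∃ w : Fin n → ℝ, w ≠ 0 ∧ A.mulVec w = lam j • w)
    (P : Fin r → Matrix (Fin n) (Fin n) ℝ)
    (hPmem : ∀ j, ∀ x : Fin n → ℝ, (P j).mulVec x ∈ genEig A (lam j))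
    (hPsum : ∀ x : Fin n → ℝ, ∑ j, (P j).mulVec x = x)
    (Y : Fin p → Fin (t + 1) → ℝ) (xtrue : Fin n → ℝ)
    (ΛA : Finset (Fin p)) (hΛA : ΛA.card ≤ s)
    (hdata : ∀ i ∉ ΛA, Y i = obsMap t A C i xtrue)
    (h2sobs : ∀ j, 2 * s + 1 ≤ {i : Fin p | eigObs A C (lam j) i}.ncard) :
    ∀ j : Fin r,
      (s + 1 ≤ {i : Fin p | eigObs A C (lam j) i ∧
          agrees t A C lam Y j ((P j).mulVec xtrue) i}.ncard) ∧
      (∀ xj ∈ genEig A (lam j), xj ≠ (P j).mulVec xtrue →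
        {i : Fin p | eigObs A C (lam j) i ∧ agrees t A C lam Y j xj i}.ncard ≤ s) ∧
      (∀ xj ∈ genEig A (lam j),
        s + 1 ≤ {i : Fin p | eigObs A C (lam j) i ∧ agrees t A C lam Y j xj i}.ncard →
        xj = (P j).mulVec xtrue) := by

  intro j
  -- the key uniqueness property for honest observable sensors
  have hK : ∀ i, i ∉ ΛA → eigObs A C (lam j) i → ∀ xj ∈ genEig A (lam j),
      agrees t A C lam Y j xj i → xj = (P j).mulVec xtrue := by
    rintro i hiA hio xj hxj ⟨z, hz, hzY⟩
    set e : Fin r → Fin n → ℝ := fun k =>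
      if k = j then xj - (P j).mulVec xtrue else z k - (P k).mulVec xtrue with he
    have hemem : ∀ k, e k ∈ genEig A (lam k) := by
      intro k
      by_cases hk : k = j
      · subst hk; simp only [he, if_pos rfl]; exact genEig_sub hxj (hPmem k xtrue)
      · simp only [he, if_neg hk]; exact genEig_sub (hz k hk) (hPmem k xtrue)
    have hPx : (P j).mulVec xtrue + ∑ k ∈ Finset.univ.erase j, (P k).mulVec xtrue
        = xtrue := by
      have h := Finset.add_sum_erase Finset.univ (fun k => (P k).mulVec xtrue)
        (Finset.mem_univ j)
      exact h.trans (hPsum xtrue)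
    have hsum : ∑ k, e k = (xj + ∑ k ∈ Finset.univ.erase j, z k) - xtrue := by
      rw [← Finset.add_sum_erase _ e (Finset.mem_univ j)]
      have h2 : ∑ k ∈ Finset.univ.erase j, e k
          = (∑ k ∈ Finset.univ.erase j, z k)
            - ∑ k ∈ Finset.univ.erase j, (P k).mulVec xtrue := by
        rw [← Finset.sum_sub_distrib]
        exact Finset.sum_congr rfl fun k hk => by
          simp [he, (Finset.mem_erase.1 hk).1]
      rw [h2]
      simp only [he, if_pos rfl]
      have hgoal : (xj - (P j).mulVec xtrue) +
          ((∑ k ∈ Finset.univ.erase j, z k)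
            - ∑ k ∈ Finset.univ.erase j, (P k).mulVec xtrue)
          = (xj + ∑ k ∈ Finset.univ.erase j, z k)
            - ((P j).mulVec xtrue + ∑ k ∈ Finset.univ.erase j, (P k).mulVec xtrue) := by
        abel
      rw [hgoal, hPx]
    have hzero : ∀ τ : Fin (t + 1), ((C * A ^ (τ : ℕ)).mulVec (∑ k, e k)) i = 0 := by
      intro τ
      have h1 := congrFun hzY τ
      have h2 := congrFun (hdata i hiA) τ
      simp only [obsMap] at h1 h2
      rw [hsum, Matrix.mulVec_sub, Pi.sub_apply, h1, h2, sub_self]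
    have h0 := key_zero hlam ht hio hemem hzero
    have h0' : xj - (P j).mulVec xtrue = 0 := by simpa [he] using h0
    exact sub_eq_zero.1 h0'
  -- part (a)
  have hAcard : (↑ΛA : Set (Fin p)).ncard = ΛA.card := Set.ncard_coe_finset ΛA
  have ha : s + 1 ≤ {i : Fin p | eigObs A C (lam j) i ∧
      agrees t A C lam Y j ((P j).mulVec xtrue) i}.ncard := by
    have hsub : {i : Fin p | eigObs A C (lam j) i} \ ↑ΛA ⊆
        {i : Fin p | eigObs A C (lam j) i ∧
          agrees t A C lam Y j ((P j).mulVec xtrue) i} := by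
      rintro i ⟨hio, hiA⟩
      refine ⟨hio, ⟨fun k => (P k).mulVec xtrue, fun k _ => hPmem k xtrue, ?_⟩⟩
      have hPx : (P j).mulVec xtrue + ∑ k ∈ Finset.univ.erase j, (P k).mulVec xtrue
          = xtrue := by
        have h := Finset.add_sum_erase Finset.univ (fun k => (P k).mulVec xtrue)
          (Finset.mem_univ j)
        exact h.trans (hPsum xtrue)
      rw [hPx]
      exact (hdata i hiA).symm
    have h1 : {i : Fin p | eigObs A C (lam j) i}.ncard ≤
        ({i : Fin p | eigObs A C (lam j) i} \ ↑ΛA).ncard + (↑ΛA : Set (Fin p)).ncard := by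
      refine le_trans (Set.ncard_le_ncard ?_ (Set.toFinite _)) (Set.ncard_union_le _ _)
      intro x hx
      by_cases hxA : x ∈ ΛA
      · exact Or.inr hxA
      · exact Or.inl ⟨hx, hxA⟩
    have h2 := h2sobs j
    have h3 : s + 1 ≤ ({i : Fin p | eigObs A C (lam j) i} \ ↑ΛA).ncard := by omega
    exact le_trans h3 (Set.ncard_le_ncard hsub (Set.toFinite _))
  -- part (b)
  have hb : ∀ xj ∈ genEig A (lam j), xj ≠ (P j).mulVec xtrue →
      {i : Fin p | eigObs A C (lam j) i ∧ agrees t A C lam Y j xj i}.ncard ≤ s := by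
    intro xj hxj hne
    have hsub2 : {i : Fin p | eigObs A C (lam j) i ∧ agrees t A C lam Y j xj i} ⊆
        ↑ΛA := by
      rintro i ⟨hio, hag⟩
      by_contra hiA
      exact hne (hK i hiA hio xj hxj hag)
    calc {i : Fin p | eigObs A C (lam j) i ∧ agrees t A C lam Y j xj i}.ncard
        ≤ (↑ΛA : Set (Fin p)).ncard := Set.ncard_le_ncard hsub2 (Set.toFinite _)
      _ = ΛA.card := hAcard
      _ ≤ s := hΛA
  refine ⟨ha, hb, ?_⟩
  intro xj hxj hge
  by_contra hne
  have := hb xj hxj hne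
  omega
end
end

section
/- Assume 2s ≤ p, the system is 2s-sparse observable, and the data Y_1,…,Y_p are generated under at most s attacks from x_true. Then for every subspace index j, the sub-SSR problem has the unique solution P_j x_true: that is, the set {x_j ∈ V^j : there exists Γ ⊆ {1,…,p} with |Γ| = p − s such that x_j agrees with sensor i for all i ∈ Γ} equals {P_j x_true}. Consequently, the unique plausible state x_true equals the sum over j of the unique sub-SSR solutions. (Lemma 4, claim 3.) -/
open Matrix

noncomputable section

open Polynomial

lemma sum_mulVec'_s12 {a b : ℕ} {ι : Type*} (s : Finset ι) (f : ι → Matrix (Fin a) (Fin b) ℝ)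
    (w : Fin b → ℝ) : (∑ τ ∈ s, f τ) *ᵥ w = ∑ τ ∈ s, f τ *ᵥ w := by
  ext i
  simp only [Matrix.mulVec, dotProduct, Matrix.sum_apply, Finset.sum_apply,
    Finset.sum_mul]
  exact Finset.sum_comm

lemma phi_zero {n p : ℕ} (A : Matrix (Fin n) (Fin n) ℝ) (C : Matrix (Fin p) (Fin n) ℝ)
    (i : Fin p) (w : Fin n → ℝ)
    (h : ∀ τ < n, ((C * A ^ τ) *ᵥ w) i = 0) (q : Polynomial ℝ) :
    ((C * (Polynomial.aeval A q)) *ᵥ w) i = 0 := by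
  rcases Nat.eq_zero_or_pos n with hn | hn
  · subst hn; simp [Matrix.mulVec, dotProduct]
  have hsmall : ∀ q : ℝ[X], q.natDegree < n → ((C * Polynomial.aeval A q) *ᵥ w) i = 0 := by
    intro q hq
    rw [Polynomial.aeval_eq_sum_range' hq A, Matrix.mul_sum, sum_mulVec'_s12, Finset.sum_apply]
    refine Finset.sum_eq_zero fun τ hτ => ?_
    rw [Matrix.mul_smul, Matrix.smul_mulVec]
    simp [h τ (Finset.mem_range.mp hτ)]
  have hmoddeg : (q %ₘ A.charpoly).natDegree < n := by
    by_cases h0 : q %ₘ A.charpoly = 0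
    · simpa [h0] using hn
    · have hd := Polynomial.degree_modByMonic_lt q (Matrix.charpoly_monic A)
      have := Polynomial.natDegree_lt_natDegree h0 hd
      rwa [Matrix.charpoly_natDegree_eq_dim, Fintype.card_fin] at this
  have hsplit := Polynomial.modByMonic_add_div q A.charpoly
  have heq : Polynomial.aeval A q = Polynomial.aeval A (q %ₘ A.charpoly) := by
    conv_lhs => rw [← hsplit]
    rw [map_add, _root_.map_mul, Matrix.aeval_self_charpoly, zero_mul, add_zero]
  rw [heq]
  exact hsmall _ hmoddeg

lemma mode_zero {n p r : ℕ} (A : Matrix (Fin n) (Fin n) ℝ) (C : Matrix (Fin p) (Fin n) ℝ)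
    (lam : Fin r → ℝ) (hlam : Function.Injective lam) (j : Fin r)
    (v : Fin r → Fin n → ℝ) (hv : ∀ k, v k ∈ genEig A (lam k))
    (i : Fin p) (h : ∀ τ < n, ((C * A ^ τ) *ᵥ (∑ k, v k)) i = 0) (τ : ℕ) :
    ((C * A ^ τ) *ᵥ (v j)) i = 0 := by
  classical
  set g : ℝ[X] := ∏ k ∈ Finset.univ.erase j, (X - Polynomial.C (lam k)) ^ n with hg
  have hcop : IsCoprime g ((X - Polynomial.C (lam j)) ^ n) := by
    apply IsCoprime.prod_left
    intro k hk
    exact (Polynomial.pairwise_coprime_X_sub_C hlam (Finset.ne_of_mem_erase hk)).pow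
  obtain ⟨a, b, hab⟩ := hcop
  have haev : ∀ μ : ℝ, Polynomial.aeval A ((X - Polynomial.C μ) ^ n) = (A - μ • 1) ^ n := by
    intro μ
    rw [map_pow, map_sub, Polynomial.aeval_X, Polynomial.aeval_C,
      Algebra.algebraMap_eq_smul_one]
  have hvm : ∀ k, ((A - lam k • 1) ^ n) *ᵥ v k = 0 := fun k => hv k
  have hkill : ∀ k, k ≠ j → (Polynomial.aeval A (a * g)) *ᵥ v k = 0 := by
    intro k hk
    have hfac : a * g = (a * ∏ m ∈ (Finset.univ.erase j).erase k,
        (X - Polynomial.C (lam m)) ^ n) * (X - Polynomial.C (lam k)) ^ n := by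
      rw [hg, ← Finset.mul_prod_erase _ _ (Finset.mem_erase.mpr ⟨hk, Finset.mem_univ k⟩)]
      ring
    rw [hfac, _root_.map_mul, ← Matrix.mulVec_mulVec, haev, hvm k, Matrix.mulVec_zero]
  have hself : (Polynomial.aeval A (a * g)) *ᵥ v j = v j := by
    have h1 : a * g = 1 - b * (X - Polynomial.C (lam j)) ^ n := by
      rw [← hab]; ring
    rw [h1, map_sub, _root_.map_one, Matrix.sub_mulVec, Matrix.one_mulVec, _root_.map_mul,
      ← Matrix.mulVec_mulVec, haev, hvm j, Matrix.mulVec_zero, sub_zero]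
  have hrep : v j = (Polynomial.aeval A (a * g)) *ᵥ (∑ k, v k) := by
    have hsum : (Polynomial.aeval A (a * g)) *ᵥ (∑ k, v k)
        = ∑ k, (Polynomial.aeval A (a * g)) *ᵥ v k := by
      have := map_sum (Matrix.mulVecLin (Polynomial.aeval A (a * g))) v Finset.univ
      simpa only [Matrix.mulVecLin_apply] using this
    rw [hsum, Finset.sum_eq_single j (fun k _ hk => hkill k hk) (by simp), hself]
  rw [hrep, Matrix.mulVec_mulVec]
  have hmul : C * A ^ τ * Polynomial.aeval A (a * g)
      = C * Polynomial.aeval A (X ^ τ * (a * g)) := by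
    simp [_root_.map_mul, _root_.map_pow, Matrix.mul_assoc]
  rw [hmul]
  exact phi_zero A C i _ h _

/-- Lemma 4, claim 3: under `2s`-sparse observability and data generated
by at most `s` attacks, each sub-SSR problem has the unique solution `P_j x_true`, and
the unique plausible state `x_true` is the sum of the sub-SSR solutions. -/
theorem sub_ssr_unique_solution
    {n p r s t : ℕ} (hsp : 2 * s ≤ p) (ht : n - 1 ≤ t)
    (A : Matrix (Fin n) (Fin n) ℝ) (C : Matrix (Fin p) (Fin n) ℝ)
    (lam : Fin r → ℝ) (hlam : Function.Injective lam)
    (heig : ∀ j, ∃ w : Fin n → ℝ, w ≠ 0 ∧ A.mulVec w = lam j • w)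
    (P : Fin r → Matrix (Fin n) (Fin n) ℝ)
    (hPmem : ∀ j, ∀ x : Fin n → ℝ, (P j).mulVec x ∈ genEig A (lam j))
    (hPsum : ∀ x : Fin n → ℝ, ∑ j, (P j).mulVec x = x)
    (hobs : ∀ Γ : Finset (Fin p), Γ.card = p - 2 * s →
        ∀ x : Fin n → ℝ, (∀ i ∈ Γ, ∀ τ < n, ((C * A ^ τ).mulVec x) i = 0) → x = 0)
    (Y : Fin p → Fin (t + 1) → ℝ) (xtrue : Fin n → ℝ)
    (ΛA : Finset (Fin p)) (hΛA : ΛA.card ≤ s)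
    (hdata : ∀ i ∉ ΛA, Y i = obsMap t A C i xtrue) :
    (∀ j : Fin r,
      {xj : Fin n → ℝ | xj ∈ genEig A (lam j) ∧ ∃ Γ : Finset (Fin p),
          Γ.card = p - s ∧ ∀ i ∈ Γ, agrees t A C lam Y j xj i}
        = {(P j).mulVec xtrue}) ∧
    {x : Fin n → ℝ | plausible t A C s Y x} = {xtrue} ∧
    xtrue = ∑ j, (P j).mulVec xtrue := by
  classical
  have hnt : n ≤ t + 1 := by omega
  have key : ∀ (e : Fin n → ℝ) (S : Finset (Fin p)), p - 2 * s ≤ S.card →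
      (∀ i ∈ S, ∀ τ < n, ((C * A ^ τ) *ᵥ e) i = 0) → e = 0 := by
    intro e S hS hE
    obtain ⟨S', hsub, hcard⟩ := Finset.exists_subset_card_eq hS
    exact hobs S' hcard e fun i hi τ hτ => hE i (hsub hi) τ hτ
  have cardSdiff : ∀ Γ : Finset (Fin p), Γ.card = p - s → p - 2 * s ≤ (Γ \ ΛA).card := by
    intro Γ hΓ
    have := Finset.le_card_sdiff ΛA Γ
    omega
  obtain ⟨Γ0, hΓ0sub, hΓ0card⟩ : ∃ Γ0 : Finset (Fin p), Γ0 ⊆ ΛAᶜ ∧ Γ0.card = p - s := by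
    apply Finset.exists_subset_card_eq
    rw [Finset.card_compl, Fintype.card_fin]
    omega
  have hΓ0mem : ∀ i ∈ Γ0, i ∉ ΛA := fun i hi => Finset.mem_compl.mp (hΓ0sub hi)
  refine ⟨?_, ?_, (hPsum xtrue).symm⟩
  · -- claim 1
    intro j
    ext xj
    simp only [Set.mem_setOf_eq, Set.mem_singleton_iff]
    constructor
    · rintro ⟨hmem, Γ, hΓcard, hagree⟩
      have he : xj - (P j) *ᵥ xtrue = 0 := by
        refine key _ (Γ \ ΛA) (cardSdiff Γ hΓcard) ?_
        intro i hi τ hτ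
        obtain ⟨hiΓ, hiA⟩ := Finset.mem_sdiff.mp hi
        obtain ⟨z, hz, hzY⟩ := hagree i hiΓ
        set v : Fin r → Fin n → ℝ :=
          fun k => if k = j then xj - (P j) *ᵥ xtrue else z k - (P k) *ᵥ xtrue with hvdef
        have hv : ∀ k, v k ∈ genEig A (lam k) := by
          intro k
          show ((A - lam k • 1) ^ n) *ᵥ v k = 0
          by_cases hk : k = j
          · subst hk
            simp only [hvdef, if_pos rfl, Matrix.mulVec_sub]
            rw [show ((A - lam k • 1) ^ n) *ᵥ xj = 0 from hmem,
              show ((A - lam k • 1) ^ n) *ᵥ ((P k) *ᵥ xtrue) = 0 from hPmem k xtrue, sub_zero]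
          · simp only [hvdef, if_neg hk, Matrix.mulVec_sub]
            rw [show ((A - lam k • 1) ^ n) *ᵥ z k = 0 from hz k hk,
              show ((A - lam k • 1) ^ n) *ᵥ ((P k) *ᵥ xtrue) = 0 from hPmem k xtrue, sub_zero]
        have hsumv : ∑ k, v k = (xj + ∑ k ∈ Finset.univ.erase j, z k) - xtrue := by
          rw [← Finset.add_sum_erase _ v (Finset.mem_univ j)]
          have h2 : ∑ k ∈ Finset.univ.erase j, v k
              = (∑ k ∈ Finset.univ.erase j, z k) - ∑ k ∈ Finset.univ.erase j, (P k) *ᵥ xtrue := by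
            rw [← Finset.sum_sub_distrib]
            exact Finset.sum_congr rfl fun k hk => if_neg (Finset.ne_of_mem_erase hk)
          have h3 : (P j) *ᵥ xtrue + ∑ k ∈ Finset.univ.erase j, (P k) *ᵥ xtrue = xtrue :=
            (Finset.add_sum_erase Finset.univ (fun k => (P k) *ᵥ xtrue)
              (Finset.mem_univ j)).trans (hPsum xtrue)
          rw [h2]
          simp only [hvdef, if_pos rfl]
          conv_rhs => rw [← h3]
          abel
        have hzero : ∀ τ' < n, ((C * A ^ τ') *ᵥ (∑ k, v k)) i = 0 := by
          intro τ' hτ'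
          rw [hsumv, Matrix.mulVec_sub, Pi.sub_apply]
          have e1 : ((C * A ^ τ') *ᵥ (xj + ∑ k ∈ Finset.univ.erase j, z k)) i
              = Y i ⟨τ', lt_of_lt_of_le hτ' hnt⟩ := congrFun hzY ⟨τ', lt_of_lt_of_le hτ' hnt⟩
          have e2 : Y i ⟨τ', lt_of_lt_of_le hτ' hnt⟩ = ((C * A ^ τ') *ᵥ xtrue) i :=
            congrFun (hdata i hiA) ⟨τ', lt_of_lt_of_le hτ' hnt⟩
          rw [e1, e2, sub_self]
        have := mode_zero A C lam hlam j v hv i hzero τ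
        simpa only [hvdef, if_pos rfl] using this
      exact sub_eq_zero.mp he
    · rintro rfl
      refine ⟨hPmem j xtrue, Γ0, hΓ0card, fun i hi => ?_⟩
      refine ⟨fun k => (P k) *ᵥ xtrue, fun k _ => hPmem k xtrue, ?_⟩
      have h4 : (P j) *ᵥ xtrue + ∑ k ∈ Finset.univ.erase j, (P k) *ᵥ xtrue = xtrue :=
        (Finset.add_sum_erase Finset.univ (fun k => (P k) *ᵥ xtrue)
          (Finset.mem_univ j)).trans (hPsum xtrue)
      show obsMap t A C i ((P j) *ᵥ xtrue + ∑ k ∈ Finset.univ.erase j, (P k) *ᵥ xtrue) = Y i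
      rw [h4]
      exact (hdata i (hΓ0mem i hi)).symm
  · -- claim 2
    ext x
    simp only [Set.mem_setOf_eq, Set.mem_singleton_iff]
    constructor
    · rintro ⟨Γ, hΓcard, hΓ⟩
      have he : x - xtrue = 0 := by
        refine key _ (Γ \ ΛA) (cardSdiff Γ hΓcard) ?_
        intro i hi τ hτ
        obtain ⟨hiΓ, hiA⟩ := Finset.mem_sdiff.mp hi
        rw [Matrix.mulVec_sub, Pi.sub_apply]
        have e1 : ((C * A ^ τ) *ᵥ x) i = Y i ⟨τ, lt_of_lt_of_le hτ hnt⟩ :=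
          congrFun (hΓ i hiΓ) ⟨τ, lt_of_lt_of_le hτ hnt⟩
        have e2 : Y i ⟨τ, lt_of_lt_of_le hτ hnt⟩ = ((C * A ^ τ) *ᵥ xtrue) i :=
          congrFun (hdata i hiA) ⟨τ, lt_of_lt_of_le hτ hnt⟩
        rw [e1, e2, sub_self]
      exact sub_eq_zero.mp he
    · rintro rfl
      exact ⟨Γ0, hΓ0card, fun i hi => (hdata i (hΓ0mem i hi)).symm⟩
end
end

section
/- Assume the system is q-eigenvalue observable with s ≤ q ≤ 2s, and the data Y_1,…,Y_p are generated under at most s attacks from some x_true. Define M = { x_1 + ⋯ + x_r : x_j ∈ X_j for every j, and |I_1(x_1) ∪ ⋯ ∪ I_r(x_r)| ≤ s }. Then M equals the set of plausible states, i.e., M = { x ∈ ℝ^n : ∃Γ ⊆ {1,…,p}, |Γ| = p − s, 𝒪_i x = Y_i for all i ∈ Γ }. (Proposition 1: correctness of the extended decomposition-based SSR algorithm.) -/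
open Matrix

noncomputable section

namespace SSRAux

open Polynomial

variable {n p : ℕ}

def applyVec (w : Fin n → ℝ) : Matrix (Fin n) (Fin n) ℝ →ₗ[ℝ] (Fin n → ℝ) where
  toFun M := M.mulVec w
  map_add' M N := Matrix.add_mulVec M N w
  map_smul' c M := Matrix.smul_mulVec c M w

/-- `seqL A C i m x = C_i A^m x` as a linear functional in `x`. -/
def seqL (A : Matrix (Fin n) (Fin n) ℝ) (C : Matrix (Fin p) (Fin n) ℝ) (i : Fin p) (m : ℕ) :
    (Fin n → ℝ) →ₗ[ℝ] ℝ :=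
  LinearMap.proj i ∘ₗ C.mulVecLin ∘ₗ (A ^ m).mulVecLin

lemma seqL_apply (A : Matrix (Fin n) (Fin n) ℝ) (C : Matrix (Fin p) (Fin n) ℝ)
    (i : Fin p) (m : ℕ) (x : Fin n → ℝ) :
    seqL A C i m x = (C.mulVec ((A ^ m).mulVec x)) i := rfl

/-- `phiL A C i w f = C_i (f(A) w)` as a linear functional in `f`. -/
def phiL (A : Matrix (Fin n) (Fin n) ℝ) (C : Matrix (Fin p) (Fin n) ℝ) (i : Fin p)
    (w : Fin n → ℝ) : Polynomial ℝ →ₗ[ℝ] ℝ :=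
  LinearMap.proj i ∘ₗ C.mulVecLin ∘ₗ applyVec w ∘ₗ (Polynomial.aeval A).toLinearMap

lemma phiL_apply (A : Matrix (Fin n) (Fin n) ℝ) (C : Matrix (Fin p) (Fin n) ℝ) (i : Fin p)
    (w : Fin n → ℝ) (f : Polynomial ℝ) :
    phiL A C i w f = (C.mulVec ((Polynomial.aeval A f).mulVec w)) i := rfl

lemma phiL_X_pow (A : Matrix (Fin n) (Fin n) ℝ) (C : Matrix (Fin p) (Fin n) ℝ) (i : Fin p)
    (w : Fin n → ℝ) (m : ℕ) : phiL A C i w (X ^ m) = seqL A C i m w := by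
  simp [phiL_apply, seqL_apply, map_pow]

lemma phiL_eq_zero (A : Matrix (Fin n) (Fin n) ℝ) (C : Matrix (Fin p) (Fin n) ℝ) (i : Fin p)
    (w : Fin n → ℝ) (h : ∀ m : ℕ, seqL A C i m w = 0) (f : Polynomial ℝ) :
    phiL A C i w f = 0 := by
  conv_lhs => rw [f.as_sum_support]
  rw [map_sum]
  refine Finset.sum_eq_zero fun k _ => ?_
  rw [← Polynomial.C_mul_X_pow_eq_monomial, Polynomial.C_mul', _root_.map_smul, phiL_X_pow,
    h k, smul_zero]

/-- Window-to-all extension via Cayley–Hamilton. -/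
lemma seq_ext {t : ℕ} (A : Matrix (Fin n) (Fin n) ℝ) (C : Matrix (Fin p) (Fin n) ℝ) (i : Fin p)
    (w : Fin n → ℝ) (ht : n - 1 ≤ t)
    (h : ∀ τ : Fin (t + 1), seqL A C i (τ : ℕ) w = 0) :
    ∀ m : ℕ, seqL A C i m w = 0 := by
  rcases Nat.eq_zero_or_pos n with hn | hn
  · subst hn
    intro m
    rw [seqL_apply]
    simp [Matrix.mulVec, dotProduct]
  · set c := A.charpoly with hc
    have hmono : c.Monic := Matrix.charpoly_monic A
    have hndeg : c.natDegree = n := by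
      rw [hc, Matrix.charpoly_natDegree_eq_dim, Fintype.card_fin]
    have hdegc : c.degree = (n : WithBot ℕ) := by
      rw [Polynomial.degree_eq_natDegree hmono.ne_zero, hndeg]
    have hdeg : (X ^ n - c).degree < (n : WithBot ℕ) := by
      have := Polynomial.degree_sub_lt (p := (X : ℝ[X]) ^ n) (q := c)
        (by rw [Polynomial.degree_X_pow, hdegc]) (pow_ne_zero _ Polynomial.X_ne_zero)
        (by rw [Polynomial.leadingCoeff_X_pow, hmono.leadingCoeff])
      rwa [Polynomial.degree_X_pow] at this
    intro m
    induction m using Nat.strong_induction_on with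
    | _ m IH =>
      by_cases hm : m ≤ t
      · have := h ⟨m, Nat.lt_succ_of_le hm⟩
        simpa using this
      · push_neg at hm
        have hnm : n ≤ m := by omega
        have key : (X : ℝ[X]) ^ m = X ^ (m - n) * (X ^ n - c) + X ^ (m - n) * c := by
          rw [← mul_add, sub_add_cancel, ← pow_add, Nat.sub_add_cancel hnm]
        have h2 : phiL A C i w (X ^ (m - n) * c) = 0 := by
          rw [phiL_apply, _root_.map_mul, hc, Matrix.aeval_self_charpoly, mul_zero,
            Matrix.zero_mulVec, Matrix.mulVec_zero]
          rfl
        have h1 : phiL A C i w (X ^ (m - n) * (X ^ n - c)) = 0 := by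
          conv_lhs => rw [Polynomial.as_sum_support (X ^ n - c), Finset.mul_sum]
          rw [map_sum]
          refine Finset.sum_eq_zero fun k hk => ?_
          have hkn : k < n := by
            have hle := Polynomial.le_degree_of_ne_zero (Polynomial.mem_support_iff.mp hk)
            have hlt := lt_of_le_of_lt hle hdeg
            exact_mod_cast hlt
          have hmul : (X : ℝ[X]) ^ (m - n) * monomial k ((X ^ n - c).coeff k)
              = ((X ^ n - c).coeff k) • X ^ (m - n + k) := by
            rw [← Polynomial.C_mul_X_pow_eq_monomial, Polynomial.C_mul', mul_smul_comm,
              ← pow_add]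
          rw [hmul, _root_.map_smul, phiL_X_pow, IH (m - n + k) (by omega), smul_zero]
        rw [← phiL_X_pow, key, map_add, h1, h2, add_zero]

lemma genEig_aeval_pow (A : Matrix (Fin n) (Fin n) ℝ) (μ : ℝ) (x : Fin n → ℝ)
    (hx : x ∈ genEig A μ) :
    (Polynomial.aeval A ((X - Polynomial.C μ) ^ n)).mulVec x = 0 := by
  have h : Polynomial.aeval A ((X - Polynomial.C μ) ^ n) = (A - μ • 1) ^ n := by
    rw [map_pow, map_sub, aeval_X, aeval_C, Algebra.algebraMap_eq_smul_one]
  rw [h]; exact hx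

/-- Separation of generalized eigencomponents in the sensor response. -/
lemma key {r : ℕ} (A : Matrix (Fin n) (Fin n) ℝ) (C : Matrix (Fin p) (Fin n) ℝ) (i : Fin p)
    (lam : Fin r → ℝ) (hlam : Function.Injective lam)
    (w : Fin r → Fin n → ℝ) (hw : ∀ k, w k ∈ genEig A (lam k))
    (h0 : ∀ m : ℕ, seqL A C i m (∑ k, w k) = 0) (j : Fin r) :
    ∀ m : ℕ, seqL A C i m (w j) = 0 := by
  classical
  set pj : ℝ[X] := ∏ k ∈ Finset.univ.erase j, (X - Polynomial.C (lam k)) ^ n with hpj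
  have hkill : ∀ k, k ≠ j → (Polynomial.aeval A pj).mulVec (w k) = 0 := by
    intro k hkj
    have hk : k ∈ Finset.univ.erase j := Finset.mem_erase.mpr ⟨hkj, Finset.mem_univ k⟩
    have hsplit : pj = (∏ x ∈ (Finset.univ.erase j).erase k,
        (X - Polynomial.C (lam x)) ^ n) * (X - Polynomial.C (lam k)) ^ n := by
      rw [hpj, mul_comm]
      exact (Finset.mul_prod_erase _ (fun x => (X - Polynomial.C (lam x)) ^ n) hk).symm
    rw [hsplit, _root_.map_mul, ← Matrix.mulVec_mulVec, genEig_aeval_pow A _ _ (hw k),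
      Matrix.mulVec_zero]
  have hsum : (Polynomial.aeval A pj).mulVec (∑ k, w k)
      = (Polynomial.aeval A pj).mulVec (w j) := by
    have h1 : (Polynomial.aeval A pj).mulVec (∑ k, w k)
        = ∑ k, (Polynomial.aeval A pj).mulVec (w k) := by
      rw [← Matrix.mulVecLin_apply, map_sum]
      simp [Matrix.mulVecLin_apply]
    rw [h1]
    exact Finset.sum_eq_single_of_mem j (Finset.mem_univ j) fun k _ hkj => hkill k hkj
  have hcop : IsCoprime pj ((X - Polynomial.C (lam j)) ^ n) := by
    apply IsCoprime.prod_left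
    intro k hk
    have hne : lam k ≠ lam j := fun h => (Finset.mem_erase.mp hk).1 (hlam h)
    exact (Polynomial.isCoprime_X_sub_C_of_isUnit_sub
      (isUnit_iff_ne_zero.mpr (sub_ne_zero.mpr hne))).pow
  obtain ⟨a, b, hab⟩ := hcop
  have hrep : w j = (Polynomial.aeval A (a * pj)).mulVec (∑ k, w k) := by
    have h1 : (Polynomial.aeval A (a * pj + b * (X - Polynomial.C (lam j)) ^ n)).mulVec (w j)
        = w j := by
      rw [hab, _root_.map_one, Matrix.one_mulVec]
    rw [map_add, Matrix.add_mulVec] at h1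
    have h2 : (Polynomial.aeval A (b * (X - Polynomial.C (lam j)) ^ n)).mulVec (w j) = 0 := by
      rw [_root_.map_mul, ← Matrix.mulVec_mulVec, genEig_aeval_pow A _ _ (hw j),
        Matrix.mulVec_zero]
    rw [h2, add_zero] at h1
    calc w j = (Polynomial.aeval A (a * pj)).mulVec (w j) := h1.symm
      _ = (Polynomial.aeval A a).mulVec ((Polynomial.aeval A pj).mulVec (w j)) := by
          rw [Matrix.mulVec_mulVec, _root_.map_mul]
      _ = (Polynomial.aeval A a).mulVec ((Polynomial.aeval A pj).mulVec (∑ k, w k)) := by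
          rw [hsum]
      _ = (Polynomial.aeval A (a * pj)).mulVec (∑ k, w k) := by
          rw [Matrix.mulVec_mulVec, _root_.map_mul]
  intro m
  have hpoly : (Polynomial.aeval A) (X ^ m * (a * pj)) = A ^ m * (Polynomial.aeval A) (a * pj) := by
    rw [_root_.map_mul, map_pow, aeval_X]
  have hfin : seqL A C i m (w j) = phiL A C i (∑ k, w k) (X ^ m * (a * pj)) := by
    rw [seqL_apply, phiL_apply, hrep, hpoly, Matrix.mulVec_mulVec, Matrix.mulVec_mulVec,
      Matrix.mulVec_mulVec, Matrix.mul_assoc]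
  rw [hfin]
  exact phiL_eq_zero A C i _ h0 _

lemma obsMap_eq_seqL {t : ℕ} (A : Matrix (Fin n) (Fin n) ℝ) (C : Matrix (Fin p) (Fin n) ℝ)
    (i : Fin p) (x : Fin n → ℝ) (τ : Fin (t + 1)) :
    obsMap t A C i x τ = seqL A C i (τ : ℕ) x := by
  rw [seqL_apply, Matrix.mulVec_mulVec]
  rfl

lemma genEig_sub (A : Matrix (Fin n) (Fin n) ℝ) (μ : ℝ) {x y : Fin n → ℝ}
    (hx : x ∈ genEig A μ) (hy : y ∈ genEig A μ) : x - y ∈ genEig A μ := by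
  have : ((A - μ • 1) ^ n).mulVec (x - y)
      = ((A - μ • 1) ^ n).mulVec x - ((A - μ • 1) ^ n).mulVec y := by
    rw [Matrix.mulVec_sub]
  show ((A - μ • 1) ^ n).mulVec (x - y) = 0
  rw [this, hx, hy, sub_zero]

/-- Window version of the separation lemma, comparing two decompositions. -/
lemma key_window {r t : ℕ} (ht : n - 1 ≤ t) (A : Matrix (Fin n) (Fin n) ℝ)
    (C : Matrix (Fin p) (Fin n) ℝ) (i : Fin p) (lam : Fin r → ℝ)
    (hlam : Function.Injective lam) (a b : Fin r → Fin n → ℝ)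
    (ha : ∀ k, a k ∈ genEig A (lam k)) (hb : ∀ k, b k ∈ genEig A (lam k))
    (h : obsMap t A C i (∑ k, a k) = obsMap t A C i (∑ k, b k)) :
    ∀ j, ∀ m : ℕ, seqL A C i m (a j) = seqL A C i m (b j) := by
  have hw : ∀ k, a k - b k ∈ genEig A (lam k) := fun k => genEig_sub A _ (ha k) (hb k)
  have h0 : ∀ τ : Fin (t + 1), seqL A C i (τ : ℕ) (∑ k, (a k - b k)) = 0 := by
    intro τ
    have hsum : ∑ k, (a k - b k) = (∑ k, a k) - ∑ k, b k := Finset.sum_sub_distrib _ _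
    rw [hsum, map_sub]
    have := congrFun h τ
    rw [obsMap_eq_seqL, obsMap_eq_seqL] at this
    rw [this, sub_self]
  have hall := seq_ext A C i _ ht h0
  intro j m
  have := key A C i lam hlam _ hw hall j m
  rw [map_sub] at this
  linarith [this]

end SSRAux

open SSRAux

/-- Proposition 1: correctness of the extended decomposition-based SSR
algorithm under `q`-eigenvalue observability with `s ≤ q ≤ 2s`. -/
theorem extended_decomposition_ssr_correct
    {n p r s q t : ℕ} (hsp : s ≤ p) (hsq : s ≤ q) (hq2s : q ≤ 2 * s) (ht : n - 1 ≤ t)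
    (A : Matrix (Fin n) (Fin n) ℝ) (C : Matrix (Fin p) (Fin n) ℝ)
    (lam : Fin r → ℝ) (hlam : Function.Injective lam)
    (heig : ∀ j, ∃ w : Fin n → ℝ, w ≠ 0 ∧ A.mulVec w = lam j • w)
    (P : Fin r → Matrix (Fin n) (Fin n) ℝ)
    (hPmem : ∀ j, ∀ x : Fin n → ℝ, (P j).mulVec x ∈ genEig A (lam j))
    (hPsum : ∀ x : Fin n → ℝ, ∑ j, (P j).mulVec x = x)
    (Y : Fin p → Fin (t + 1) → ℝ) (xtrue : Fin n → ℝ)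
    (ΛA : Finset (Fin p)) (hΛA : ΛA.card ≤ s)
    (hdata : ∀ i ∉ ΛA, Y i = obsMap t A C i xtrue)
    (hqobs : ∀ j, q + 1 ≤ {i : Fin p | eigObs A C (lam j) i}.ncard) :
    {x : Fin n → ℝ | ∃ v : Fin r → Fin n → ℝ,
        (∀ j, v j ∈ Xset t A C lam Y s q j) ∧
        (⋃ j, Iset t A C lam Y j (v j)).ncard ≤ s ∧ x = ∑ j, v j}
      = {x : Fin n → ℝ | plausible t A C s Y x} := by
  classical
  ext x
  simp only [Set.mem_setOf_eq]
  constructor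
  · rintro ⟨v, hX, hI, rfl⟩
    by_cases hr : r = 0
    · -- degenerate: no eigenvalues, every vector is zero
      subst hr
      have hzero : ∀ y : Fin n → ℝ, y = 0 := fun y => by
        have := hPsum y
        simpa using this.symm
      obtain ⟨Γ, hΓsub, hΓcard⟩ := Finset.exists_subset_card_eq
        (s := ΛAᶜ) (n := p - s) (by
          rw [Finset.card_compl, Fintype.card_fin]; omega)
      refine ⟨Γ, hΓcard, fun i hi => ?_⟩
      have hiA : i ∉ ΛA := Finset.mem_compl.mp (hΓsub hi)
      rw [hdata i hiA]
      exact congrArg (obsMap t A C i) ((hzero _).trans (hzero xtrue).symm)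
    · have hr' : 0 < r := Nat.pos_of_ne_zero hr
      set j0 : Fin r := ⟨0, hr'⟩ with hj0
      set U := ⋃ j, Iset t A C lam Y j (v j) with hU
      have hgood : ∀ i : Fin p, i ∉ U → obsMap t A C i (∑ j, v j) = Y i := by
        intro i hiU
        have hag : ∀ j, agrees t A C lam Y j (v j) i := by
          intro j
          by_contra hcon
          exact hiU (Set.mem_iUnion.mpr ⟨j, hcon⟩)
        choose z hz hobs using hag
        set c : Fin r → Fin r → Fin n → ℝ := fun j k => if k = j then v j else z j k with hcdef
        have hcmem : ∀ j k, c j k ∈ genEig A (lam k) := by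
          intro j k
          by_cases hkj : k = j
          · subst hkj
            simpa [hcdef] using (hX k).1
          · simpa [hcdef, hkj] using hz j k hkj
        have hobs' : ∀ j, obsMap t A C i (∑ k, c j k) = Y i := by
          intro j
          have hcsum : ∑ k, c j k = v j + ∑ k ∈ Finset.univ.erase j, z j k := by
            rw [← Finset.add_sum_erase _ _ (Finset.mem_univ j)]
            congr 1
            · simp [hcdef]
            · exact Finset.sum_congr rfl fun k hk => by
                simp [hcdef, (Finset.mem_erase.mp hk).1]
          rw [hcsum]
          exact hobs j
        have hkeyc : ∀ j k, ∀ m : ℕ, seqL A C i m (c j k) = seqL A C i m (c j0 k) := fun j =>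
          key_window ht A C i lam hlam (c j) (c j0) (hcmem j) (hcmem j0)
            ((hobs' j).trans (hobs' j0).symm)
        funext τ
        rw [obsMap_eq_seqL]
        have hsplit : seqL A C i (τ : ℕ) (∑ j, v j) = seqL A C i (τ : ℕ) (∑ k, c j0 k) := by
          rw [map_sum, map_sum]
          refine Finset.sum_congr rfl fun j _ => ?_
          by_cases hj : j = j0
          · subst hj
            simp [hcdef]
          · have h1 := hkeyc j j (τ : ℕ)
            simpa [hcdef] using h1
        rw [hsplit, ← obsMap_eq_seqL, hobs' j0]
      -- build Γ from the complement of U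
      have hUcompl : p - s ≤ Uᶜ.ncard := by
        have hsum := Set.ncard_add_ncard_compl U
        rw [Nat.card_eq_fintype_card, Fintype.card_fin] at hsum
        omega
      have hUcfin : Uᶜ.Finite := Set.toFinite _
      obtain ⟨Γ, hΓsub, hΓcard⟩ := Finset.exists_subset_card_eq
        (s := hUcfin.toFinset) (n := p - s)
        (by rwa [← Set.ncard_eq_toFinset_card Uᶜ hUcfin])
      refine ⟨Γ, hΓcard, fun i hi => ?_⟩
      have hmem : i ∈ Uᶜ := by
        have := hΓsub hi
        rwa [Set.Finite.mem_toFinset] at this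
      exact hgood i hmem
  · rintro ⟨Γ, hΓcard, hΓ⟩
    have hagree : ∀ i ∈ Γ, ∀ j, agrees t A C lam Y j ((P j).mulVec x) i := by
      intro i hi j
      refine ⟨fun k => (P k).mulVec x, fun k _ => hPmem k x, ?_⟩
      have hsum : (P j).mulVec x + ∑ k ∈ Finset.univ.erase j, (fun k => (P k).mulVec x) k
          = ∑ k, (P k).mulVec x :=
        Finset.add_sum_erase Finset.univ (fun k => (P k).mulVec x) (Finset.mem_univ j)
      rw [hsum, hPsum x]
      exact hΓ i hi
    have hcomplcard : ((↑Γ : Set (Fin p))ᶜ).ncard = s := by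
      have hsum := Set.ncard_add_ncard_compl (↑Γ : Set (Fin p))
      rw [Nat.card_eq_fintype_card, Fintype.card_fin, Set.ncard_coe_finset, hΓcard] at hsum
      omega
    refine ⟨fun j => (P j).mulVec x, fun j => ⟨hPmem j x, ?_⟩, ?_, (hPsum x).symm⟩
    · -- Xset cardinality bound
      have hsub2 : {i : Fin p | eigObs A C (lam j) i} ∩ ↑Γ ⊆
          {i : Fin p | eigObs A C (lam j) i ∧ agrees t A C lam Y j ((P j).mulVec x) i} := by
        rintro i ⟨h1, h2⟩
        exact ⟨h1, hagree i h2 j⟩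
      have hcover : {i : Fin p | eigObs A C (lam j) i} ⊆
          ({i : Fin p | eigObs A C (lam j) i} ∩ ↑Γ) ∪ (↑Γ : Set (Fin p))ᶜ := by
        intro i hi
        by_cases hiΓ : i ∈ (↑Γ : Set (Fin p))
        · exact Or.inl ⟨hi, hiΓ⟩
        · exact Or.inr hiΓ
      have hcard1 : q + 1 ≤ ({i : Fin p | eigObs A C (lam j) i} ∩ ↑Γ).ncard + s := by
        calc q + 1 ≤ {i : Fin p | eigObs A C (lam j) i}.ncard := hqobs j
          _ ≤ (({i : Fin p | eigObs A C (lam j) i} ∩ ↑Γ) ∪ (↑Γ : Set (Fin p))ᶜ).ncard :=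
              Set.ncard_le_ncard hcover (Set.toFinite _)
          _ ≤ ({i : Fin p | eigObs A C (lam j) i} ∩ ↑Γ).ncard
              + ((↑Γ : Set (Fin p))ᶜ).ncard := Set.ncard_union_le _ _
          _ = ({i : Fin p | eigObs A C (lam j) i} ∩ ↑Γ).ncard + s := by rw [hcomplcard]
      have hcard2 : ({i : Fin p | eigObs A C (lam j) i} ∩ ↑Γ).ncard ≤
          {i : Fin p | eigObs A C (lam j) i ∧
            agrees t A C lam Y j ((P j).mulVec x) i}.ncard :=
        Set.ncard_le_ncard hsub2 (Set.toFinite _)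
      have hfin : q + 1 - s ≤ {i : Fin p | eigObs A C (lam j) i ∧
          agrees t A C lam Y j ((P j).mulVec x) i}.ncard := by omega
      exact hfin
    · -- union of Iset bound
      have hIsub : (⋃ j, Iset t A C lam Y j ((P j).mulVec x)) ⊆ (↑Γ : Set (Fin p))ᶜ := by
        intro i hi
        rw [Set.mem_iUnion] at hi
        obtain ⟨j, hj⟩ := hi
        intro hiΓ
        exact hj (hagree i hiΓ j)
      calc (⋃ j, Iset t A C lam Y j ((P j).mulVec x)).ncard
          ≤ ((↑Γ : Set (Fin p))ᶜ).ncard := Set.ncard_le_ncard hIsub (Set.toFinite _)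
        _ = s := hcomplcard
end
end

section
/- Let H ∈ ℝ^{l×n}, g ∈ ℝ^l, let 𝒞 = {x ∈ ℝ^n : Hx + g ≥ 0 componentwise}, and let γ ∈ (0,1]. Let x : ℕ → ℝ^n be a sequence and T ∈ ℕ be such that for all τ ≥ T, H x(τ+1) + g ≥ (1−γ)(H x(τ) + g) componentwise. Then: (i) for all τ ≥ T and every component k ∈ {1,…,l}, (H x(τ) + g)_k ≥ (1−γ)^{τ−T} (H x(T) + g)_k; (ii) if x(T) ∈ 𝒞 then x(τ) ∈ 𝒞 for all τ ≥ T; (iii) for every component k, min{(H x(τ) + g)_k, 0} → 0 as τ → ∞. (Theorem 1: forward invariance and asymptotic attraction of the polytopic safe set under the discrete-time CBF condition.) -/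
open Matrix

/-- Theorem 1: forward invariance and asymptotic attraction of the
polytopic safe set `{x | Hx + g ≥ 0}` along any sequence satisfying the discrete-time
CBF condition with parameter `γ ∈ (0,1]` from time `T` on. -/
theorem cbf_safety_and_attraction
    {n l : ℕ} (H : Matrix (Fin l) (Fin n) ℝ) (g : Fin l → ℝ)
    (γ : ℝ) (hγ0 : 0 < γ) (hγ1 : γ ≤ 1)
    (x : ℕ → Fin n → ℝ) (T : ℕ)
    (hcbf : ∀ τ ≥ T, ∀ k : Fin l,
      H.mulVec (x (τ + 1)) k + g k ≥ (1 - γ) * (H.mulVec (x τ) k + g k)) :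
    (∀ τ ≥ T, ∀ k : Fin l,
      H.mulVec (x τ) k + g k ≥ (1 - γ) ^ (τ - T) * (H.mulVec (x T) k + g k)) ∧
    ((∀ k : Fin l, H.mulVec (x T) k + g k ≥ 0) →
      ∀ τ ≥ T, ∀ k : Fin l, H.mulVec (x τ) k + g k ≥ 0) ∧
    (∀ k : Fin l, Filter.Tendsto (fun τ : ℕ => min (H.mulVec (x τ) k + g k) 0)
      Filter.atTop (nhds 0)) := by
  have hc0 : (0:ℝ) ≤ 1 - γ := by linarith
  have hc1 : (1:ℝ) - γ < 1 := by linarith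
  have key : ∀ τ ≥ T, ∀ k : Fin l,
      H.mulVec (x τ) k + g k ≥ (1 - γ) ^ (τ - T) * (H.mulVec (x T) k + g k) := by
    intro τ hτ
    induction τ, hτ using Nat.le_induction with
    | base => intro k; simp
    | succ m hm ih =>
      intro k
      have h1 := hcbf m hm k
      have h2 := ih k
      have h3 : (1 - γ) * ((1 - γ) ^ (m - T) * (H.mulVec (x T) k + g k)) ≤
          (1 - γ) * (H.mulVec (x m) k + g k) := by
        exact mul_le_mul_of_nonneg_left h2 hc0
      have hexp : m + 1 - T = (m - T) + 1 := by omega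
      rw [hexp, pow_succ]
      calc (1 - γ) ^ (m - T) * (1 - γ) * (H.mulVec (x T) k + g k)
          = (1 - γ) * ((1 - γ) ^ (m - T) * (H.mulVec (x T) k + g k)) := by ring
        _ ≤ (1 - γ) * (H.mulVec (x m) k + g k) := h3
        _ ≤ H.mulVec (x (m + 1)) k + g k := h1
  refine ⟨key, ?_, ?_⟩
  · intro h0 τ hτ k
    have := key τ hτ k
    have : (0:ℝ) ≤ (1 - γ) ^ (τ - T) * (H.mulVec (x T) k + g k) :=
      mul_nonneg (pow_nonneg hc0 _) (h0 k)
    linarith [key τ hτ k]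
  · intro k
    have hpow : Filter.Tendsto (fun τ : ℕ => (1 - γ) ^ (τ - T) * min (H.mulVec (x T) k + g k) 0)
        Filter.atTop (nhds 0) := by
      have h1 : Filter.Tendsto (fun τ : ℕ => (1 - γ) ^ (τ - T)) Filter.atTop (nhds 0) := by
        have := tendsto_pow_atTop_nhds_zero_of_lt_one hc0 hc1
        exact this.comp (Filter.tendsto_atTop_atTop.mpr (fun b => ⟨b + T, fun a ha => by omega⟩))
      simpa using h1.mul_const (min (H.mulVec (x T) k + g k) 0)
    apply tendsto_of_tendsto_of_tendsto_of_le_of_le' hpow tendsto_const_nhds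
    · filter_upwards [Filter.eventually_ge_atTop T] with τ hτ
      have h2 := key τ hτ k
      have hp : (0:ℝ) ≤ (1 - γ) ^ (τ - T) := pow_nonneg hc0 _
      rcases le_or_gt (H.mulVec (x τ) k + g k) 0 with h | h
      · rw [min_eq_left h]
        calc (1 - γ) ^ (τ - T) * min (H.mulVec (x T) k + g k) 0
            ≤ (1 - γ) ^ (τ - T) * (H.mulVec (x T) k + g k) :=
              mul_le_mul_of_nonneg_left (min_le_left _ _) hp
          _ ≤ H.mulVec (x τ) k + g k := h2
      · rw [min_eq_right h.le]
        exact mul_nonpos_of_nonneg_of_nonpos hp (min_le_right _ _)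
    · filter_upwards with τ using min_le_right _ _
end
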